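/- arXiv:1907.11457 — 7 statements merged into one kernel-verified Lean document; each statement's English description precedes it below -/
import Mathlib

section
/- Let σ_1, …, σ_k be affine bases of ℝⁿ and A_1, …, A_k : ℝⁿ → ℝᵐ affine maps such that for all i, i', the maps A_i and A_{i'} agree on convexHull ℝ (Set.range σ_i) ∩ convexHull ℝ (Set.range σ_{i'}). Let N be the two-hidden-layer feed-forward network of the paper's architecture determined by the σ_i and A_i. Then for every x ∈ ⋃_i convexHull ℝ (Set.range σ_i), one has Σ_i ψ_i(x) ≥ 1 (so N(x) is well defined), and N(x) = A_j(x) for every j such that x ∈ convexHull ℝ (Set.range σ_j). (This is the correctness of the indicator–averaging readout φ_3 in the proof of Theorem 3.1.) -/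
open scoped BigOperators

/-- The indicator ψ of an affine basis σ: 1 if all barycentric coordinates of x with
respect to σ are ≥ 0 (i.e. x lies in the simplex spanned by σ), 0 otherwise. -/
noncomputable def simplexIndicator {n : ℕ}
    (σ : AffineBasis (Fin (n + 1)) ℝ (Fin n → ℝ)) (x : Fin n → ℝ) : ℝ :=
  if ∀ i, 0 ≤ σ.coord i x then 1 else 0

/-- The two-hidden-layer feed-forward network of the paper's architecture determined by
affine bases σ_1, …, σ_k of ℝⁿ and affine maps A_1, …, A_k : ℝⁿ → ℝᵐ:
N(x) = (Σ_i ψ_i(x) • A_i(x)) / (Σ_i ψ_i(x)). -/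
noncomputable def paperNetwork {n m k : ℕ}
    (σ : Fin k → AffineBasis (Fin (n + 1)) ℝ (Fin n → ℝ))
    (A : Fin k → ((Fin n → ℝ) →ᵃ[ℝ] (Fin m → ℝ))) (x : Fin n → ℝ) : Fin m → ℝ :=
  (∑ i, simplexIndicator (σ i) x)⁻¹ • ∑ i, simplexIndicator (σ i) x • A i (x)

lemma simplexIndicator_eq_one_iff {n : ℕ}
    (σ : AffineBasis (Fin (n + 1)) ℝ (Fin n → ℝ)) (x : Fin n → ℝ) :
    simplexIndicator σ x = 1 ↔ x ∈ convexHull ℝ (Set.range σ) := by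
  rw [σ.convexHull_eq_nonneg_coord, simplexIndicator]
  split <;> simp_all

/-- If the affine maps A_i agree pairwise on intersections of the simplices
spanned by the σ_i, then on the union of those simplices Σ_i ψ_i(x) ≥ 1 and the network
agrees with A_j on the simplex spanned by σ_j. -/
theorem paperNetwork_correct (n m k : ℕ)
    (σ : Fin k → AffineBasis (Fin (n + 1)) ℝ (Fin n → ℝ))
    (A : Fin k → ((Fin n → ℝ) →ᵃ[ℝ] (Fin m → ℝ)))
    (hA : ∀ i i' : Fin k, ∀ x : Fin n → ℝ,
      x ∈ convexHull ℝ (Set.range (σ i)) ∩ convexHull ℝ (Set.range (σ i')) →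
        A i x = A i' x) :
    ∀ x ∈ ⋃ i, convexHull ℝ (Set.range (σ i)),
      1 ≤ ∑ i, simplexIndicator (σ i) x ∧
      ∀ j : Fin k, x ∈ convexHull ℝ (Set.range (σ j)) → paperNetwork σ A x = A j x := by
  intro x hx
  obtain ⟨s, ⟨i₀, rfl⟩, hxs⟩ := hx
  have hnn : ∀ i, 0 ≤ simplexIndicator (σ i) x := by
    intro i; unfold simplexIndicator; split <;> norm_num
  have hsum : 1 ≤ ∑ i, simplexIndicator (σ i) x := by
    have h1 : simplexIndicator (σ i₀) x = 1 := (simplexIndicator_eq_one_iff _ _).2 hxs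
    calc 1 = simplexIndicator (σ i₀) x := h1.symm
      _ ≤ ∑ i, simplexIndicator (σ i) x :=
        Finset.single_le_sum (fun i _ => hnn i) (Finset.mem_univ i₀)
  refine ⟨hsum, fun j hj => ?_⟩
  have hterm : ∀ i, simplexIndicator (σ i) x • A i x = simplexIndicator (σ i) x • A j x := by
    intro i
    by_cases h : simplexIndicator (σ i) x = 1
    · rw [hA i j x ⟨(simplexIndicator_eq_one_iff _ _).1 h, hj⟩]
    · have : simplexIndicator (σ i) x = 0 := by
        unfold simplexIndicator at *; split <;> simp_all
      simp [this]
  have hne : (∑ i, simplexIndicator (σ i) x) ≠ 0 := by linarith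
  rw [paperNetwork]
  simp_rw [hterm, ← Finset.sum_smul, smul_smul, inv_mul_cancel₀ hne, one_smul]
end

section
/- (Theorem 3.1) Let K be a finite simplicial complex in ℝⁿ that is pure n-dimensional, i.e., every face of K is contained in a face consisting of n+1 points which form an affine basis of ℝⁿ, and let L be a simplicial complex in ℝᵐ. Let F : ℝⁿ → ℝᵐ be a simplicial map from K to L. Then there exist affine bases σ_1, …, σ_k of ℝⁿ (the maximal faces of K) and affine maps A_1, …, A_k : ℝⁿ → ℝᵐ such that the two-hidden-layer feed-forward network N of the paper's architecture determined by the σ_i and A_i satisfies N(x) = F(x) for every x ∈ K.space. -/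
open scoped BigOperators
open Geometry

/-- A simplicial map from K to L: affine on (the convex hull of) each face of K, sending
vertices of K to vertices of L, and each face of K into some face of L. -/
def IsSimplicialMap {n m : ℕ} (K : SimplicialComplex ℝ (Fin n → ℝ))
    (L : SimplicialComplex ℝ (Fin m → ℝ)) (F : (Fin n → ℝ) → (Fin m → ℝ)) : Prop :=
  (∀ σ ∈ K.faces, ∃ A : (Fin n → ℝ) →ᵃ[ℝ] (Fin m → ℝ),
      ∀ x ∈ convexHull ℝ (σ : Set (Fin n → ℝ)), F x = A x) ∧
  (∀ v ∈ K.vertices, F v ∈ L.vertices) ∧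
  (∀ σ ∈ K.faces, ∃ μ ∈ L.faces,
      F '' convexHull ℝ (σ : Set (Fin n → ℝ)) ⊆ convexHull ℝ (μ : Set (Fin m → ℝ)))

/-- K is pure n-dimensional: every face is contained in a face consisting of n+1 points
which form an affine basis of ℝⁿ. -/
def IsPureComplex {n : ℕ} (K : SimplicialComplex ℝ (Fin n → ℝ)) : Prop :=
  ∀ σ ∈ K.faces, ∃ τ ∈ K.faces, σ ⊆ τ ∧
    ∃ b : AffineBasis (Fin (n + 1)) ℝ (Fin n → ℝ), Set.range ⇑b = (τ : Set (Fin n → ℝ))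

/-- Theorem 3.1: every simplicial map F from a finite pure simplicial
complex K in ℝⁿ to a simplicial complex L in ℝᵐ is realized, on K.space, by a
two-hidden-layer feed-forward network of the paper's architecture whose affine bases
are (the vertex sets of) maximal faces of K. -/
theorem simplicialMap_eq_paperNetwork (n m : ℕ)
    (K : SimplicialComplex ℝ (Fin n → ℝ)) (hKfin : K.faces.Finite)
    (hKpure : IsPureComplex K)
    (L : SimplicialComplex ℝ (Fin m → ℝ))
    (F : (Fin n → ℝ) → (Fin m → ℝ)) (hF : IsSimplicialMap K L F) :
    ∃ (k : ℕ) (σ : Fin k → AffineBasis (Fin (n + 1)) ℝ (Fin n → ℝ))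
      (A : Fin k → ((Fin n → ℝ) →ᵃ[ℝ] (Fin m → ℝ))),
      (∀ i, ∃ τ ∈ K.faces, Set.range ⇑(σ i) = (τ : Set (Fin n → ℝ))) ∧
      ∀ x ∈ K.space, paperNetwork σ A x = F x := by
  classical
  obtain ⟨hFaff, hFvert, hFface⟩ := hF
  set T : Set (Finset (Fin n → ℝ)) :=
    {τ | τ ∈ K.faces ∧ ∃ b : AffineBasis (Fin (n + 1)) ℝ (Fin n → ℝ),
      Set.range ⇑b = (τ : Set (Fin n → ℝ))} with hTdef
  have hTfin : T.Finite := hKfin.subset fun τ hτ => hτ.1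
  set s := hTfin.toFinset with hs
  set k := s.card with hk
  let e : Fin k ≃ s := s.equivFin.symm
  have hmem : ∀ i : Fin k, ((e i : Finset (Fin n → ℝ))) ∈ K.faces ∧
      ∃ b : AffineBasis (Fin (n + 1)) ℝ (Fin n → ℝ),
        Set.range ⇑b = (((e i : Finset (Fin n → ℝ))) : Set (Fin n → ℝ)) := by
    intro i
    exact (Set.Finite.mem_toFinset hTfin).mp (e i).2
  choose hfaces b hb using hmem
  choose A hA using fun i => hFaff _ (hfaces i)
  refine ⟨k, b, A, fun i => ⟨e i, hfaces i, hb i⟩, ?_⟩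
  intro x hx
  rw [Geometry.SimplicialComplex.mem_space_iff] at hx
  obtain ⟨σ0, hσ0, hxσ0⟩ := hx
  obtain ⟨τ, hτK, hστ, bτ, hbτ⟩ := hKpure σ0 hσ0
  have hτT : τ ∈ s := by
    rw [hs, Set.Finite.mem_toFinset]
    exact ⟨hτK, bτ, hbτ⟩
  set i0 : Fin k := e.symm ⟨τ, hτT⟩ with hi0def
  have hi0 : ((e i0 : Finset (Fin n → ℝ))) = τ := by
    simp [hi0def]
  have hpsi : ∀ i, simplexIndicator (b i) x =
      if x ∈ convexHull ℝ (((e i : Finset (Fin n → ℝ))) : Set (Fin n → ℝ)) then 1 else 0 := by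
    intro i
    have : convexHull ℝ (((e i : Finset (Fin n → ℝ))) : Set (Fin n → ℝ)) =
        { y | ∀ j, 0 ≤ (b i).coord j y } := by
      rw [← hb i, (b i).convexHull_eq_nonneg_coord]
    rw [simplexIndicator, this]
    simp [Set.mem_setOf_eq]
  have hxτ : x ∈ convexHull ℝ (((e i0 : Finset (Fin n → ℝ))) : Set (Fin n → ℝ)) := by
    rw [hi0]
    exact convexHull_mono (by exact_mod_cast hστ) hxσ0
  have hψi0 : simplexIndicator (b i0) x = 1 := by rw [hpsi i0, if_pos hxτ]
  have hψnonneg : ∀ i, 0 ≤ simplexIndicator (b i) x := by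
    intro i; rw [hpsi i]; split <;> norm_num
  have hsum_pos : 0 < ∑ i, simplexIndicator (b i) x := by
    have h1 : simplexIndicator (b i0) x ≤ ∑ i, simplexIndicator (b i) x :=
      Finset.single_le_sum (fun i _ => hψnonneg i) (Finset.mem_univ i0)
    linarith [hψi0.ge.trans h1]
  have hterm : ∀ i, simplexIndicator (b i) x • A i x = simplexIndicator (b i) x • F x := by
    intro i
    rw [hpsi i]
    split
    · next h => rw [hA i x h]
    · simp
  rw [paperNetwork]
  simp_rw [hterm]
  rw [← Finset.sum_smul, inv_smul_smul₀ hsum_pos.ne']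
end

section
/- (Proposition 5.1) Let X be a compact metric space, K a finite simplicial complex in ℝⁿ, and τ : X ≃ₜ K.space a homeomorphism (where K.space carries the subspace topology of ℝⁿ). Then for every ε > 0 there exists γ > 0 such that for every simplicial complex K' in ℝⁿ with K'.space = K.space whose mesh is at most γ, every face σ ∈ K'.faces satisfies Metric.diam (τ.symm '' (convexHull ℝ σ)) ≤ ε (i.e., the extended mesh of X induced by (K', τ) is at most ε). -/
open Geometry

/-- Proposition 5.1: if X is a compact metric space homeomorphic to the
space of a finite simplicial complex K in ℝⁿ via τ, then for every ε > 0 there is γ > 0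
such that any complex K' with the same space and mesh at most γ has extended mesh
(the mesh of X induced by (K', τ)) at most ε. -/
theorem extended_mesh_small (n : ℕ) (X : Type*) [MetricSpace X] [CompactSpace X]
    (K : SimplicialComplex ℝ (Fin n → ℝ)) (hKfin : K.faces.Finite)
    (τ : X ≃ₜ K.space) :
    ∀ ε > 0, ∃ γ > 0, ∀ K' : SimplicialComplex ℝ (Fin n → ℝ),
      K'.space = K.space →
      (∀ σ ∈ K'.faces, Metric.diam (σ : Set (Fin n → ℝ)) ≤ γ) →
      ∀ σ ∈ K'.faces,
        Metric.diam
          (τ.symm '' {p : K.space | (p : Fin n → ℝ) ∈ convexHull ℝ (σ : Set (Fin n → ℝ))})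
          ≤ ε := by
  intro ε hε
  have hcomp : IsCompact K.space := by
    rw [SimplicialComplex.space]
    exact hKfin.isCompact_biUnion fun σ _ => σ.finite_toSet.isCompact_convexHull ℝ
  haveI : CompactSpace K.space := isCompact_iff_compactSpace.mp hcomp
  have hu : UniformContinuous (τ.symm : K.space → X) :=
    CompactSpace.uniformContinuous_of_continuous τ.symm.continuous
  rw [Metric.uniformContinuous_iff] at hu
  obtain ⟨δ, hδ, hδ'⟩ := hu ε hε
  refine ⟨δ / 2, by positivity, ?_⟩
  intro K' _ hmesh σ hσ
  apply Metric.diam_le_of_forall_dist_le hε.le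
  rintro x ⟨p, hp, rfl⟩ y ⟨q, hq, rfl⟩
  have hbd : Bornology.IsBounded (convexHull ℝ (σ : Set (Fin n → ℝ))) :=
    (σ.finite_toSet.isCompact_convexHull ℝ).isBounded
  have hd : dist p q < δ := by
    have h1 : dist (p : Fin n → ℝ) (q : Fin n → ℝ) ≤
        Metric.diam (convexHull ℝ (σ : Set (Fin n → ℝ))) :=
      Metric.dist_le_diam_of_mem hbd hp hq
    rw [convexHull_diam] at h1
    calc dist p q = dist (p : Fin n → ℝ) (q : Fin n → ℝ) := Subtype.dist_eq p q
      _ ≤ Metric.diam (σ : Set (Fin n → ℝ)) := h1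
      _ ≤ δ / 2 := hmesh σ hσ
      _ < δ := by linarith
  exact (hδ' hd).le
end

section
/- (Proposition 5.3) Let X and Y be compact metric spaces, K a finite simplicial complex in ℝⁿ and L a finite simplicial complex in ℝᵐ, and τ_K : X ≃ₜ K.space and τ_L : Y ≃ₜ L.space homeomorphisms (the spaces carrying the subspace topologies). Let g : X → Y be continuous and ε > 0. Then there exist a subdivision K' of K, a subdivision L' of L, and a simplicial map F from K' to L' such that for every x ∈ X, dist(g(x), τ_L.symm (F (τ_K x))) ≤ ε. -/
open Finset Metric

namespace SimplexApprox
attribute [local instance] Classical.propDecidable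
set_option linter.unusedSectionVars false
set_option linter.unusedVariables false

variable {E : Type*} [NormedAddCommGroup E] [NormedSpace ℝ E]

/-- criterion for affine independence of a finset via global weight functions -/
theorem finset_affineIndependent_iff {s : Finset E} :
    AffineIndependent ℝ ((↑) : s → E) ↔
      ∀ f : E → ℝ, ∑ v ∈ s, f v = 0 → ∑ v ∈ s, f v • v = 0 → ∀ v ∈ s, f v = 0 := by
  constructor
  · intro h f h1 h2 v hv
    have key := affineIndependent_iff.1 h Finset.univ (fun e : s => f ↑e) ?_ ?_ ⟨v, hv⟩ (mem_univ _)
    · exact key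
    · rw [← Finset.sum_coe_sort s f] at h1; exact h1
    · rw [← Finset.sum_coe_sort s (fun v => f v • v)] at h2; exact h2
  · intro h
    rw [affineIndependent_iff]
    intro t u h1 h2 e he
    classical
    set f : E → ℝ := fun v => if hv : v ∈ s then (if ⟨v, hv⟩ ∈ t then u ⟨v, hv⟩ else 0) else 0 with hf
    have hfe : ∀ e : s, f ↑e = if e ∈ t then u e else 0 := by
      intro e; simp only [hf, dif_pos e.2, Subtype.coe_eta]
    have hsum : ∑ v ∈ s, f v = ∑ e ∈ t, u e := by
      rw [← Finset.sum_coe_sort s f]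
      rw [Finset.sum_congr rfl fun e _ => hfe e]
      rw [Finset.sum_ite_mem]
      congr 1
      exact Finset.inter_eq_right.2 fun e _ => Finset.mem_attach _ _
    have hsum2 : ∑ v ∈ s, f v • v = ∑ e ∈ t, u e • (e : E) := by
      rw [← Finset.sum_coe_sort s (fun v => f v • v)]
      rw [Finset.sum_congr rfl (fun e _ => by rw [hfe e, ite_smul, zero_smul])]
      rw [Finset.sum_ite_mem]
      congr 1
      exact Finset.inter_eq_right.2 fun e _ => Finset.mem_attach _ _
    have := h f (by rw [hsum, h1]) (by rw [hsum2, h2]) ↑e e.2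
    rwa [hfe, if_pos he] at this

theorem coords_unique {s : Finset E} (hs : AffineIndependent ℝ ((↑) : s → E))
    {f g : E → ℝ} (hsum : ∑ v ∈ s, f v = ∑ v ∈ s, g v)
    (hpt : ∑ v ∈ s, f v • v = ∑ v ∈ s, g v • v) : ∀ v ∈ s, f v = g v := by
  intro v hv
  have := finset_affineIndependent_iff.1 hs (fun v => f v - g v) (by
      rw [Finset.sum_sub_distrib, hsum, sub_self]) (by
      simp only [sub_smul]
      rw [Finset.sum_sub_distrib, hpt, sub_self]) v hv
  linarith

theorem mem_hull_of_weights {A : Finset E} {t : E → ℝ} (h0 : ∀ v ∈ A, 0 ≤ t v)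
    (h1 : ∑ v ∈ A, t v = 1) : ∑ v ∈ A, t v • v ∈ convexHull ℝ (A : Set E) := by
  rw [Finset.convexHull_eq]
  exact ⟨t, h0, h1, by rw [Finset.centerMass_eq_of_sum_1 _ _ h1]; simp⟩

theorem weights_of_mem_hull {A : Finset E} {x : E} (hx : x ∈ convexHull ℝ (A : Set E)) :
    ∃ t : E → ℝ, (∀ v ∈ A, 0 ≤ t v) ∧ ∑ v ∈ A, t v = 1 ∧ ∑ v ∈ A, t v • v = x := by
  rw [Finset.convexHull_eq] at hx
  obtain ⟨w, h0, h1, hc⟩ := hx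
  exact ⟨w, h0, h1, by rw [← hc, Finset.centerMass_eq_of_sum_1 _ _ h1]; simp⟩

end SimplexApprox
open Finset Metric

namespace SimplexApprox
attribute [local instance] Classical.propDecidable
set_option linter.unusedSectionVars false
set_option linter.unusedVariables false

variable {E : Type*} [NormedAddCommGroup E] [NormedSpace ℝ E]

noncomputable def cent (A : Finset E) : E := (A.card : ℝ)⁻¹ • ∑ v ∈ A, v

noncomputable def tf (c : Finset (Finset E)) (w : Finset E → ℝ) (v : E) : ℝ :=
  ∑ A ∈ c.filter (fun A => v ∈ A), w A / A.card

noncomputable def Sc (c : Finset (Finset E)) (w : Finset E → ℝ) (A : Finset E) : ℝ :=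
  ∑ B ∈ c.filter (fun B => A ⊆ B), w B / B.card

theorem chain_exists_max {c : Finset (Finset E)} (hne : c.Nonempty)
    (hc : IsChain (· ⊆ ·) (c : Set (Finset E))) : ∃ M ∈ c, ∀ A ∈ c, A ⊆ M := by
  obtain ⟨M, hM, hmax⟩ := c.exists_maximal hne
  refine ⟨M, hM, fun A hA => ?_⟩
  rcases eq_or_ne A M with rfl | hne'
  · exact subset_rfl
  · rcases hc.total (Finset.mem_coe.2 hA) (Finset.mem_coe.2 hM) with h | h
    · exact h
    · exact hmax hA h

theorem chain_exists_min {c : Finset (Finset E)} (hne : c.Nonempty)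
    (hc : IsChain (· ⊆ ·) (c : Set (Finset E))) : ∃ M ∈ c, ∀ A ∈ c, M ⊆ A := by
  obtain ⟨M, hM, hmin⟩ := c.exists_minimal hne
  refine ⟨M, hM, fun A hA => ?_⟩
  rcases eq_or_ne A M with rfl | hne'
  · exact subset_rfl
  · rcases hc.total (Finset.mem_coe.2 hA) (Finset.mem_coe.2 hM) with h | h
    · exact hmin hA h
    · exact h

theorem chain_exists_witness {c : Finset (Finset E)} (hc : IsChain (· ⊆ ·) (c : Set (Finset E)))
    {A : Finset E} (hA : A ∈ c) (hAne : A.Nonempty) :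
    ∃ v ∈ A, ∀ B ∈ c, (v ∈ B ↔ A ⊆ B) := by
  classical
  set c' := c.filter (fun B => B ⊆ A ∧ B ≠ A) with hc'def
  have hc'c : (c' : Set (Finset E)) ⊆ (c : Set (Finset E)) := by
    intro B hB; exact Finset.mem_coe.2 (Finset.filter_subset _ _ (Finset.mem_coe.1 hB))
  rcases c'.eq_empty_or_nonempty with h | h
  · obtain ⟨v, hv⟩ := hAne
    refine ⟨v, hv, fun B hB => ⟨fun hvB => ?_, fun hAB => hAB hv⟩⟩
    rcases hc.total (Finset.mem_coe.2 hA) (Finset.mem_coe.2 hB) with h1 | h1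
    · exact h1
    · rcases eq_or_ne B A with rfl | hne'
      · exact subset_rfl
      · have hBc' : B ∈ c.filter (fun B => B ⊆ A ∧ B ≠ A) := Finset.mem_filter.2 ⟨hB, h1, hne'⟩
        rw [← hc'def, h] at hBc'
        exact absurd hBc' (Finset.notMem_empty _)
  · obtain ⟨M, hM, hMmax⟩ := chain_exists_max h (hc.mono hc'c)
    have hMA : M ⊂ A := by
      have := (Finset.mem_filter.1 hM).2
      exact ssubset_of_subset_of_ne this.1 this.2
    obtain ⟨v, hvA, hvM⟩ := Finset.exists_of_ssubset hMA
    refine ⟨v, hvA, fun B hB => ⟨fun hvB => ?_, fun hAB => hAB hvA⟩⟩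
    rcases hc.total (Finset.mem_coe.2 hA) (Finset.mem_coe.2 hB) with h1 | h1
    · exact h1
    · rcases eq_or_ne B A with rfl | hne'
      · exact subset_rfl
      · have hBc' : B ∈ c' := Finset.mem_filter.2 ⟨hB, h1, hne'⟩
        exact absurd (hMmax B hBc' hvB) hvM

theorem tf_nonneg {c : Finset (Finset E)} {w : Finset E → ℝ} (hw0 : ∀ A ∈ c, 0 ≤ w A)
    (v : E) : 0 ≤ tf c w v :=
  Finset.sum_nonneg fun A hA =>
    div_nonneg (hw0 A (Finset.mem_filter.1 hA).1) (Nat.cast_nonneg _)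

theorem cent_weights {V A : Finset E} (hAV : A ⊆ V) (hAne : A.Nonempty) :
    (∑ u ∈ V, (if u ∈ A then (A.card : ℝ)⁻¹ else 0)) = 1 ∧
    (∑ u ∈ V, (if u ∈ A then (A.card : ℝ)⁻¹ else 0) • u) = cent A := by
  classical
  have hfil : V.filter (fun u => u ∈ A) = A := by
    rw [Finset.filter_mem_eq_inter, Finset.inter_eq_right.2 hAV]
  constructor
  · rw [← Finset.sum_filter, hfil, Finset.sum_const, nsmul_eq_mul,
      mul_inv_cancel₀ (Nat.cast_ne_zero.2 hAne.card_ne_zero)]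
  · rw [Finset.sum_congr rfl (fun u _ => by rw [ite_smul, zero_smul]),
      ← Finset.sum_filter, hfil, cent, Finset.smul_sum]

theorem cent_mem_hull {A : Finset E} (hA : A.Nonempty) : cent A ∈ convexHull ℝ (A : Set E) := by
  have h := cent_weights (subset_rfl (a := A)) hA
  have h0 : ∀ v ∈ A, (0:ℝ) ≤ (if v ∈ A then (A.card : ℝ)⁻¹ else 0) := by
    intro v hv; rw [if_pos hv]; positivity
  have := mem_hull_of_weights h0 h.1
  rwa [h.2] at this

theorem sum_cent_eq {c : Finset (Finset E)} {w : Finset E → ℝ} {V : Finset E}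
    (hcV : ∀ A ∈ c, A ⊆ V) (hcne : ∀ A ∈ c, A.Nonempty) :
    ∑ A ∈ c, w A • cent A = ∑ v ∈ V, tf c w v • v := by
  classical
  have step : ∀ A ∈ c, w A • cent A = ∑ v ∈ V, (if v ∈ A then w A / A.card else 0) • v := by
    intro A hA
    have hfil : V.filter (fun u => u ∈ A) = A := by
      rw [Finset.filter_mem_eq_inter, Finset.inter_eq_right.2 (hcV A hA)]
    rw [Finset.sum_congr rfl (fun u _ => by rw [ite_smul, zero_smul]),
      ← Finset.sum_filter, hfil, cent, smul_smul, Finset.smul_sum]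
    apply Finset.sum_congr rfl
    intro v _
    rw [div_eq_mul_inv, mul_comm]
  rw [Finset.sum_congr rfl step, Finset.sum_comm]
  apply Finset.sum_congr rfl
  intro v _
  rw [← Finset.sum_smul]
  congr 1
  unfold tf
  rw [Finset.sum_filter]

theorem sum_tf_eq {c : Finset (Finset E)} {w : Finset E → ℝ} {V : Finset E}
    (hcV : ∀ A ∈ c, A ⊆ V) (hcne : ∀ A ∈ c, A.Nonempty) :
    ∑ v ∈ V, tf c w v = ∑ A ∈ c, w A := by
  classical
  unfold tf
  rw [Finset.sum_congr rfl (fun v (_ : v ∈ V) => Finset.sum_filter (fun A => v ∈ A) (fun A => w A / A.card)),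
    Finset.sum_comm]
  apply Finset.sum_congr rfl
  intro A hA
  have hfil : V.filter (fun u => u ∈ A) = A := by
    rw [Finset.filter_mem_eq_inter, Finset.inter_eq_right.2 (hcV A hA)]
  rw [← Finset.sum_filter, hfil, Finset.sum_const, nsmul_eq_mul,
    mul_div_cancel₀ _ (Nat.cast_ne_zero.2 (hcne A hA).card_ne_zero)]

theorem tf_vanish {c : Finset (Finset E)} {w : Finset E → ℝ} {v : E}
    (h : ∀ A ∈ c, v ∉ A) : tf c w v = 0 := by
  unfold tf
  rw [Finset.filter_false_of_mem h, Finset.sum_empty]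

theorem Sc_le_tf {c : Finset (Finset E)} {w : Finset E → ℝ}
    (hw0 : ∀ A ∈ c, 0 ≤ w A) {A : Finset E} (hA : A ∈ c) {v : E} (hv : v ∈ A) :
    Sc c w A ≤ tf c w v := by
  apply Finset.sum_le_sum_of_subset_of_nonneg
  · intro B hB
    rw [Finset.mem_filter] at hB ⊢
    exact ⟨hB.1, hB.2 hv⟩
  · intro B hB _
    exact div_nonneg (hw0 B (Finset.mem_filter.1 hB).1) (Nat.cast_nonneg _)

theorem tf_lt_Sc {c : Finset (Finset E)} (hc : IsChain (· ⊆ ·) (c : Set (Finset E)))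
    {w : Finset E → ℝ} (hw0 : ∀ A ∈ c, 0 ≤ w A)
    {A : Finset E} (hA : A ∈ c) (hAne : A.Nonempty) (hwA : w A ≠ 0) {v : E} (hvV : v ∉ A) :
    tf c w v < Sc c w A := by
  classical
  have hsub : c.filter (fun B => v ∈ B) ⊆ (c.filter (fun B => A ⊆ B)).erase A := by
    intro B hB
    rw [Finset.mem_filter] at hB
    have hAB : A ⊆ B := by
      rcases hc.total (Finset.mem_coe.2 hA) (Finset.mem_coe.2 hB.1) with h | h
      · exact h
      · exact absurd (h hB.2) hvV
    rw [Finset.mem_erase, Finset.mem_filter]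
    exact ⟨fun hBA => hvV (hBA ▸ hB.2), hB.1, hAB⟩
  have h1 : tf c w v ≤ ∑ B ∈ (c.filter (fun B => A ⊆ B)).erase A, w B / B.card :=
    Finset.sum_le_sum_of_subset_of_nonneg hsub
      (fun B hB _ => div_nonneg (hw0 B (Finset.mem_filter.1 (Finset.mem_of_mem_erase hB)).1)
        (Nat.cast_nonneg _))
  have hAmem : A ∈ c.filter (fun B => A ⊆ B) := Finset.mem_filter.2 ⟨hA, subset_rfl⟩
  have h2 := Finset.sum_erase_add (c.filter (fun B => A ⊆ B)) (fun B => w B / B.card) hAmem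
  have hpos : 0 < w A / A.card := by
    have hcard : (0:ℝ) < A.card := by exact_mod_cast hAne.card_pos
    exact div_pos (lt_of_le_of_ne (hw0 A hA) (Ne.symm hwA)) hcard
  unfold Sc
  linarith

theorem exists_tf_eq_Sc {c : Finset (Finset E)} (hc : IsChain (· ⊆ ·) (c : Set (Finset E)))
    (w : Finset E → ℝ) {A : Finset E} (hA : A ∈ c) (hAne : A.Nonempty) :
    ∃ v ∈ A, tf c w v = Sc c w A := by
  classical
  obtain ⟨v, hv, hiff⟩ := chain_exists_witness hc hA hAne
  refine ⟨v, hv, ?_⟩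
  unfold tf Sc
  congr 1
  exact Finset.filter_congr fun B hB => hiff B hB

theorem Sc_pos {c : Finset (Finset E)} {w : Finset E → ℝ} (hw0 : ∀ A ∈ c, 0 ≤ w A)
    {A : Finset E} (hA : A ∈ c) (hAne : A.Nonempty) (hwA : w A ≠ 0) : 0 < Sc c w A := by
  classical
  have hAmem : A ∈ c.filter (fun B => A ⊆ B) := Finset.mem_filter.2 ⟨hA, subset_rfl⟩
  have hpos : 0 < w A / A.card := by
    have hcard : (0:ℝ) < A.card := by exact_mod_cast hAne.card_pos
    exact div_pos (lt_of_le_of_ne (hw0 A hA) (Ne.symm hwA)) hcard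
  refine lt_of_lt_of_le hpos (Finset.single_le_sum (f := fun B => w B / B.card) ?_ hAmem)
  intro B hB
  exact div_nonneg (hw0 B (Finset.mem_filter.1 hB).1) (Nat.cast_nonneg _)

theorem face_eq_superlevel {c : Finset (Finset E)} (hc : IsChain (· ⊆ ·) (c : Set (Finset E)))
    {w : Finset E → ℝ} (hw0 : ∀ A ∈ c, 0 ≤ w A) {V : Finset E}
    (hcV : ∀ A ∈ c, A ⊆ V) {A : Finset E} (hA : A ∈ c) (hAne : A.Nonempty) (hwA : w A ≠ 0) :
    A = V.filter (fun u => Sc c w A ≤ tf c w u) := by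
  classical
  ext u
  rw [Finset.mem_filter]
  constructor
  · intro hu
    exact ⟨hcV A hA hu, Sc_le_tf hw0 hA hu⟩
  · rintro ⟨huV, hle⟩
    by_contra hu
    exact absurd hle (not_le.2 (tf_lt_Sc hc hw0 hA hAne hwA hu))

theorem exists_min_face_of_tf_ne {c : Finset (Finset E)}
    (hc : IsChain (· ⊆ ·) (c : Set (Finset E))) {w : Finset E → ℝ}
    (hw0 : ∀ A ∈ c, 0 ≤ w A) {v : E} (hv : tf c w v ≠ 0) :
    ∃ M ∈ c, w M ≠ 0 ∧ v ∈ M ∧ tf c w v = Sc c w M := by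
  classical
  set cv := c.filter (fun B => v ∈ B ∧ w B ≠ 0) with hcvdef
  have hcvne : cv.Nonempty := by
    rw [Finset.nonempty_iff_ne_empty]
    intro h
    apply hv
    unfold tf
    apply Finset.sum_eq_zero
    intro B hB
    rw [Finset.mem_filter] at hB
    by_cases hwB : w B = 0
    · rw [hwB, zero_div]
    · have hBcv : B ∈ c.filter (fun B => v ∈ B ∧ w B ≠ 0) := Finset.mem_filter.2 ⟨hB.1, hB.2, hwB⟩
      rw [← hcvdef, h] at hBcv
      exact absurd hBcv (Finset.notMem_empty _)
  have hcvc : (cv : Set (Finset E)) ⊆ (c : Set (Finset E)) := by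
    intro B hB; exact Finset.mem_coe.2 (Finset.filter_subset _ _ (Finset.mem_coe.1 hB))
  obtain ⟨M, hM, hMmin⟩ := chain_exists_min hcvne (hc.mono hcvc)
  have hM' := Finset.mem_filter.1 hM
  refine ⟨M, hM'.1, hM'.2.2, hM'.2.1, ?_⟩
  have e1 : tf c w v = ∑ B ∈ cv, w B / B.card := by
    unfold tf
    rw [hcvdef, Finset.sum_filter, Finset.sum_filter]
    apply Finset.sum_congr rfl
    intro B _
    by_cases h1 : v ∈ B <;> by_cases h2 : w B = 0 <;> simp [h1, h2]
  have e2 : Sc c w M = ∑ B ∈ c.filter (fun B => M ⊆ B ∧ w B ≠ 0), w B / B.card := by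
    unfold Sc
    rw [Finset.sum_filter, Finset.sum_filter]
    apply Finset.sum_congr rfl
    intro B _
    by_cases h1 : M ⊆ B <;> by_cases h2 : w B = 0 <;> simp [h1, h2]
  have e3 : cv = c.filter (fun B => M ⊆ B ∧ w B ≠ 0) := by
    rw [hcvdef]
    apply Finset.filter_congr
    intro B hB
    constructor
    · rintro ⟨hvB, hwB⟩
      exact ⟨hMmin B (Finset.mem_filter.2 ⟨hB, hvB, hwB⟩), hwB⟩
    · rintro ⟨hMB, hwB⟩
      exact ⟨hMB hM'.2.1, hwB⟩
  rw [e1, e3, ← e2]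

theorem support_characterization {V : Finset E} {c : Finset (Finset E)}
    (hc : IsChain (· ⊆ ·) (c : Set (Finset E))) (hcV : ∀ A ∈ c, A ⊆ V)
    (hcne : ∀ A ∈ c, A.Nonempty) {w : Finset E → ℝ} (hw0 : ∀ A ∈ c, 0 ≤ w A) :
    c.filter (fun A => w A ≠ 0) =
      (V.filter (fun v => tf c w v ≠ 0)).image
        (fun v => V.filter (fun u => tf c w v ≤ tf c w u)) := by
  classical
  ext A
  simp only [Finset.mem_filter, Finset.mem_image]
  constructor
  · rintro ⟨hA, hwA⟩
    obtain ⟨v, hvA, hveq⟩ := exists_tf_eq_Sc hc w hA (hcne A hA)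
    refine ⟨v, ⟨hcV A hA hvA, ?_⟩, ?_⟩
    · rw [hveq]
      exact (Sc_pos hw0 hA (hcne A hA) hwA).ne'
    · rw [hveq]
      exact (face_eq_superlevel hc hw0 hcV hA (hcne A hA) hwA).symm
  · rintro ⟨v, ⟨hvV, hvne⟩, rfl⟩
    obtain ⟨M, hM, hwM, hvM, hMeq⟩ := exists_min_face_of_tf_ne hc hw0 hvne
    have heq : V.filter (fun u => tf c w v ≤ tf c w u) = M := by
      rw [hMeq]
      exact (face_eq_superlevel hc hw0 hcV hM (hcne M hM) hwM).symm
    rw [heq]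
    exact ⟨hM, hwM⟩

theorem mem_hull_support {c : Finset (Finset E)} {w : Finset E → ℝ}
    (hw0 : ∀ A ∈ c, 0 ≤ w A) (hw1 : ∑ A ∈ c, w A = 1) :
    ∑ A ∈ c, w A • cent A ∈ convexHull ℝ (((c.filter (fun A => w A ≠ 0)).image cent : Finset E) : Set E) := by
  classical
  set d := c.filter (fun A => w A ≠ 0) with hd
  have e1 : ∑ A ∈ c, w A • cent A = ∑ A ∈ d, w A • cent A := by
    symm
    apply Finset.sum_subset (Finset.filter_subset _ _)
    intro B hB hBd
    have : w B = 0 := by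
      by_contra h
      exact hBd (Finset.mem_filter.2 ⟨hB, h⟩)
    rw [this, zero_smul]
  have e2 : ∑ A ∈ d, w A = 1 := by
    rw [← hw1]
    apply Finset.sum_subset (Finset.filter_subset _ _)
    intro B hB hBd
    by_contra h
    exact hBd (Finset.mem_filter.2 ⟨hB, h⟩)
  rw [e1, ← Finset.centerMass_eq_of_sum_1 _ cent e2]
  apply Finset.centerMass_mem_convexHull
  · intro A hA
    exact hw0 A (Finset.filter_subset _ _ hA)
  · rw [e2]; norm_num
  · intro A hA
    exact Finset.mem_coe.2 (Finset.mem_image_of_mem cent hA)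

theorem cent_injOn_chain {V : Finset E} (hV : AffineIndependent ℝ ((↑) : V → E))
    {c : Finset (Finset E)} (hc : IsChain (· ⊆ ·) (c : Set (Finset E)))
    (hcV : ∀ A ∈ c, A ⊆ V) (hcne : ∀ A ∈ c, A.Nonempty) :
    Set.InjOn cent (c : Set (Finset E)) := by
  classical
  have aux : ∀ A B : Finset E, A ∈ c → B ∈ c → A ⊆ B → cent A = cent B → A = B := by
    intro A B hA hB hAB he
    by_contra hne
    obtain ⟨v, hvB, hvA⟩ := Finset.exists_of_ssubset (ssubset_of_subset_of_ne hAB hne)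
    have hwA := cent_weights (hcV A hA) (hcne A hA)
    have hwB := cent_weights (hcV B hB) (hcne B hB)
    have h := coords_unique hV (f := fun u => if u ∈ A then (A.card : ℝ)⁻¹ else 0)
      (g := fun u => if u ∈ B then (B.card : ℝ)⁻¹ else 0)
      (by rw [hwA.1, hwB.1]) (by rw [hwA.2, hwB.2, he]) v (hcV B hB hvB)
    simp only [if_neg hvA, if_pos hvB] at h
    exact absurd h.symm (inv_ne_zero (Nat.cast_ne_zero.2 (hcne B hB).card_ne_zero))
  intro A hA B hB he
  rcases hc.total hA hB with h | h
  · exact aux A B (Finset.mem_coe.1 hA) (Finset.mem_coe.1 hB) h he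
  · exact (aux B A (Finset.mem_coe.1 hB) (Finset.mem_coe.1 hA) h he.symm).symm

end SimplexApprox

namespace SimplexApprox
attribute [local instance] Classical.propDecidable
set_option linter.unusedSectionVars false
set_option linter.unusedVariables false
set_option maxHeartbeats 1000000

open Finset Metric Geometry

variable {E : Type*} [NormedAddCommGroup E] [NormedSpace ℝ E]

theorem face_nonempty {K : SimplicialComplex ℝ E} {A : Finset E} (hA : A ∈ K.faces) :
    A.Nonempty :=
  K.nonempty_of_mem_faces hA

theorem chain_tf_zero {V : Finset E} (hV : AffineIndependent ℝ ((↑) : V → E)) :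
    ∀ (N : ℕ) (c : Finset (Finset E)), c.card ≤ N → IsChain (· ⊆ ·) (c : Set (Finset E)) →
      (∀ A ∈ c, A ⊆ V) → (∀ A ∈ c, A.Nonempty) →
      ∀ w : Finset E → ℝ, (∀ v ∈ V, tf c w v = 0) → ∀ A ∈ c, w A = 0 := by
  intro N
  induction N with
  | zero =>
    intro c hcard _ _ _ w _ A hA
    rw [Nat.le_zero, Finset.card_eq_zero] at hcard
    exact absurd hA (hcard ▸ Finset.notMem_empty A)
  | succ N ih =>
    intro c hcard hchain hcV hcne w htf A hA
    have hcne' : c.Nonempty := ⟨A, hA⟩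
    obtain ⟨M, hM, hMmax⟩ := chain_exists_max hcne' hchain
    obtain ⟨v₀, hv₀M, hv₀iff⟩ := chain_exists_witness hchain hM (hcne M hM)
    have hfil : c.filter (fun B => v₀ ∈ B) = {M} := by
      ext B
      simp only [Finset.mem_filter, Finset.mem_singleton]
      constructor
      · rintro ⟨hB, hvB⟩
        exact subset_antisymm (hMmax B hB) ((hv₀iff B hB).1 hvB)
      · rintro rfl
        exact ⟨hM, hv₀M⟩
    have hwM : w M = 0 := by
      have h := htf v₀ (hcV M hM hv₀M)
      unfold tf at h
      rw [hfil, Finset.sum_singleton] at h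
      rcases div_eq_zero_iff.1 h with h' | h'
      · exact h'
      · exact absurd h' (Nat.cast_ne_zero.2 (hcne M hM).card_ne_zero)
    have herase : ∀ v ∈ V, tf (c.erase M) w v = 0 := by
      intro v hv
      have hrel : tf c w v = tf (c.erase M) w v + (if v ∈ M then w M / M.card else 0) := by
        unfold tf
        rw [Finset.filter_erase]
        by_cases hvM : v ∈ M
        · rw [if_pos hvM]
          have hMf : M ∈ c.filter (fun B => v ∈ B) := Finset.mem_filter.2 ⟨hM, hvM⟩
          rw [Finset.sum_erase_add _ _ hMf]
        · rw [if_neg hvM, add_zero, Finset.erase_eq_of_notMem]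
          intro hMf
          exact hvM (Finset.mem_filter.1 hMf).2
      have h := htf v hv
      rw [hrel, hwM] at h
      simpa using h
    have hkey := ih (c.erase M)
      (by
        have := Finset.card_erase_of_mem hM
        omega)
      (hchain.mono (fun B hB => Finset.mem_coe.2 (Finset.mem_of_mem_erase (Finset.mem_coe.1 hB))))
      (fun B hB => hcV B (Finset.mem_of_mem_erase hB))
      (fun B hB => hcne B (Finset.mem_of_mem_erase hB)) w herase
    rcases eq_or_ne A M with rfl | hne
    · exact hwM
    · exact hkey A (Finset.mem_erase.2 ⟨hne, hA⟩)

theorem bary_face_indep {V : Finset E} (hV : AffineIndependent ℝ ((↑) : V → E))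
    {c : Finset (Finset E)} (hchain : IsChain (· ⊆ ·) (c : Set (Finset E)))
    (hcV : ∀ A ∈ c, A ⊆ V) (hcne : ∀ A ∈ c, A.Nonempty) :
    AffineIndependent ℝ ((↑) : ↥(c.image cent) → E) := by
  rw [finset_affineIndependent_iff]
  intro f hsum hpt y hy
  have hinj := cent_injOn_chain hV hchain hcV hcne
  have hinj' : ∀ x ∈ c, ∀ y ∈ c, cent x = cent y → x = y :=
    fun x hx y hy h => hinj (Finset.mem_coe.2 hx) (Finset.mem_coe.2 hy) h
  have e1 : ∑ A ∈ c, f (cent A) = 0 := by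
    rw [← Finset.sum_image (g := cent) (f := f) hinj']
    exact hsum
  have e2 : ∑ A ∈ c, f (cent A) • cent A = 0 := by
    rw [← Finset.sum_image (g := cent) (f := fun y => f y • y) hinj']
    exact hpt
  have e3 : ∑ v ∈ V, tf c (fun A => f (cent A)) v = 0 := by
    rw [sum_tf_eq hcV hcne]
    exact e1
  have e4 : ∑ v ∈ V, tf c (fun A => f (cent A)) v • v = 0 := by
    rw [← sum_cent_eq hcV hcne]
    exact e2
  have htf0 : ∀ v ∈ V, tf c (fun A => f (cent A)) v = 0 :=
    finset_affineIndependent_iff.1 hV _ e3 e4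
  obtain ⟨A, hA, rfl⟩ := Finset.mem_image.1 hy
  exact chain_tf_zero hV c.card c le_rfl hchain hcV hcne _ htf0 A hA

/-- The barycentric subdivision of a simplicial complex. -/
noncomputable def bary (K : SimplicialComplex ℝ E) : SimplicialComplex ℝ E where
  faces := {t | ∃ c : Finset (Finset E), (↑c ⊆ K.faces) ∧ IsChain (· ⊆ ·) (c : Set (Finset E)) ∧
    c.Nonempty ∧ t = c.image cent}
  indep := by
    rintro s ⟨c, hcK, hchain, hcne, rfl⟩
    obtain ⟨M, hM, hMmax⟩ := chain_exists_max hcne hchain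
    exact bary_face_indep (K.indep (hcK hM)) hchain hMmax
      (fun A hA => face_nonempty (hcK hA))
  isRelLowerSet_faces := by
    rintro s ⟨c, hcK, hchain, hcne, rfl⟩
    refine ⟨hcne.image cent, fun t hts htne' => ?_⟩
    have htne : t ≠ ∅ := htne'.ne_empty
    refine ⟨c.filter (fun A => cent A ∈ t), ?_, ?_, ?_, ?_⟩
    · intro A hA
      exact hcK (Finset.mem_coe.2 (Finset.filter_subset _ _ (Finset.mem_coe.1 hA)))
    · exact hchain.mono (fun A hA =>
        Finset.mem_coe.2 (Finset.filter_subset _ _ (Finset.mem_coe.1 hA)))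
    · obtain ⟨y, hy⟩ := Finset.nonempty_iff_ne_empty.2 htne
      obtain ⟨A, hA, hAy⟩ := Finset.mem_image.1 (hts hy)
      exact ⟨A, Finset.mem_filter.2 ⟨hA, hAy ▸ hy⟩⟩
    · ext y
      rw [Finset.mem_image]
      constructor
      · intro hy
        obtain ⟨A, hA, hAy⟩ := Finset.mem_image.1 (hts hy)
        exact ⟨A, Finset.mem_filter.2 ⟨hA, hAy ▸ hy⟩, hAy⟩
      · rintro ⟨A, hA, rfl⟩
        exact (Finset.mem_filter.1 hA).2
  inter_subset_convexHull := by
    rintro s t ⟨c₁, hc₁K, hchain₁, hc₁ne, rfl⟩ ⟨c₂, hc₂K, hchain₂, hc₂ne, rfl⟩ x ⟨hx₁, hx₂⟩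
    obtain ⟨M₁, hM₁, hmax₁⟩ := chain_exists_max hc₁ne hchain₁
    obtain ⟨M₂, hM₂, hmax₂⟩ := chain_exists_max hc₂ne hchain₂
    have hind₁ := K.indep (hc₁K hM₁)
    have hind₂ := K.indep (hc₂K hM₂)
    have hnon₁ : ∀ A ∈ c₁, A.Nonempty := fun A hA => face_nonempty (hc₁K hA)
    have hnon₂ : ∀ A ∈ c₂, A.Nonempty := fun A hA => face_nonempty (hc₂K hA)
    obtain ⟨u₁, hu₁0, hu₁1, hu₁x⟩ := weights_of_mem_hull hx₁
    obtain ⟨u₂, hu₂0, hu₂1, hu₂x⟩ := weights_of_mem_hull hx₂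
    have hinj₁ : ∀ a ∈ c₁, ∀ b ∈ c₁, cent a = cent b → a = b :=
      fun a ha b hb h => cent_injOn_chain hind₁ hchain₁ hmax₁ hnon₁
        (Finset.mem_coe.2 ha) (Finset.mem_coe.2 hb) h
    have hinj₂ : ∀ a ∈ c₂, ∀ b ∈ c₂, cent a = cent b → a = b :=
      fun a ha b hb h => cent_injOn_chain hind₂ hchain₂ hmax₂ hnon₂
        (Finset.mem_coe.2 ha) (Finset.mem_coe.2 hb) h
    set w₁ : Finset E → ℝ := fun A => u₁ (cent A) with hw₁def
    set w₂ : Finset E → ℝ := fun A => u₂ (cent A) with hw₂def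
    have hw₁0 : ∀ A ∈ c₁, 0 ≤ w₁ A := fun A hA => hu₁0 _ (Finset.mem_image_of_mem cent hA)
    have hw₂0 : ∀ A ∈ c₂, 0 ≤ w₂ A := fun A hA => hu₂0 _ (Finset.mem_image_of_mem cent hA)
    have hw₁1 : ∑ A ∈ c₁, w₁ A = 1 := by rw [← hu₁1, Finset.sum_image (g := cent) (f := u₁) hinj₁]
    have hw₂1 : ∑ A ∈ c₂, w₂ A = 1 := by rw [← hu₂1, Finset.sum_image (g := cent) (f := u₂) hinj₂]
    have hx₁' : ∑ A ∈ c₁, w₁ A • cent A = x := by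
      rw [← hu₁x, Finset.sum_image (g := cent) (f := fun y => u₁ y • y) hinj₁]
    have hx₂' : ∑ A ∈ c₂, w₂ A • cent A = x := by
      rw [← hu₂x, Finset.sum_image (g := cent) (f := fun y => u₂ y • y) hinj₂]
    have hrep₁ : ∑ v ∈ M₁, tf c₁ w₁ v • v = x := by rw [← sum_cent_eq hmax₁ hnon₁]; exact hx₁'
    have hrep₂ : ∑ v ∈ M₂, tf c₂ w₂ v • v = x := by rw [← sum_cent_eq hmax₂ hnon₂]; exact hx₂'
    have hsum₁ : ∑ v ∈ M₁, tf c₁ w₁ v = 1 := by rw [sum_tf_eq hmax₁ hnon₁, hw₁1]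
    have hsum₂ : ∑ v ∈ M₂, tf c₂ w₂ v = 1 := by rw [sum_tf_eq hmax₂ hnon₂, hw₂1]
    have hxM₁ : x ∈ convexHull ℝ (M₁ : Set E) := by
      rw [← hrep₁]
      exact mem_hull_of_weights (fun v _ => tf_nonneg hw₁0 v) hsum₁
    have hxM₂ : x ∈ convexHull ℝ (M₂ : Set E) := by
      rw [← hrep₂]
      exact mem_hull_of_weights (fun v _ => tf_nonneg hw₂0 v) hsum₂
    have hxρ : x ∈ convexHull ℝ ((M₁ ∩ M₂ : Finset E) : Set E) := by
      have h := K.inter_subset_convexHull (hc₁K hM₁) (hc₂K hM₂) ⟨hxM₁, hxM₂⟩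
      rwa [← Finset.coe_inter] at h
    obtain ⟨h, hh0, hh1, hhx⟩ := weights_of_mem_hull hxρ
    set hbar : E → ℝ := fun v => if v ∈ M₁ ∩ M₂ then h v else 0 with hhbar
    have hfil₁ : M₁.filter (fun u => u ∈ M₁ ∩ M₂) = M₁ ∩ M₂ := by
      rw [Finset.filter_mem_eq_inter, Finset.inter_eq_right.2 Finset.inter_subset_left]
    have hfil₂ : M₂.filter (fun u => u ∈ M₁ ∩ M₂) = M₁ ∩ M₂ := by
      rw [Finset.filter_mem_eq_inter, Finset.inter_eq_right.2 Finset.inter_subset_right]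
    have hsumbar₁ : ∑ v ∈ M₁, hbar v = 1 := by
      rw [hhbar, ← Finset.sum_filter, hfil₁, hh1]
    have hsumbar₂ : ∑ v ∈ M₂, hbar v = 1 := by
      rw [hhbar, ← Finset.sum_filter, hfil₂, hh1]
    have hptbar₁ : ∑ v ∈ M₁, hbar v • v = x := by
      rw [hhbar, Finset.sum_congr rfl (fun u _ => by rw [ite_smul, zero_smul]),
        ← Finset.sum_filter, hfil₁, hhx]
    have hptbar₂ : ∑ v ∈ M₂, hbar v • v = x := by
      rw [hhbar, Finset.sum_congr rfl (fun u _ => by rw [ite_smul, zero_smul]),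
        ← Finset.sum_filter, hfil₂, hhx]
    have he₁ : ∀ v ∈ M₁, tf c₁ w₁ v = hbar v :=
      coords_unique hind₁ (by rw [hsum₁, hsumbar₁]) (by rw [hrep₁, hptbar₁])
    have he₂ : ∀ v ∈ M₂, tf c₂ w₂ v = hbar v :=
      coords_unique hind₂ (by rw [hsum₂, hsumbar₂]) (by rw [hrep₂, hptbar₂])
    have ht₁g : ∀ v, tf c₁ w₁ v = hbar v := by
      intro v
      by_cases hv : v ∈ M₁
      · exact he₁ v hv
      · rw [tf_vanish (fun A hA hvA => hv (hmax₁ A hA hvA)), hhbar]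
        simp only []
        rw [if_neg (fun hvρ => hv (Finset.mem_inter.1 hvρ).1)]
    have ht₂g : ∀ v, tf c₂ w₂ v = hbar v := by
      intro v
      by_cases hv : v ∈ M₂
      · exact he₂ v hv
      · rw [tf_vanish (fun A hA hvA => hv (hmax₂ A hA hvA)), hhbar]
        simp only []
        rw [if_neg (fun hvρ => hv (Finset.mem_inter.1 hvρ).2)]
    have htt : ∀ v, tf c₁ w₁ v = tf c₂ w₂ v := fun v => (ht₁g v).trans (ht₂g v).symm
    have hsupp : ∀ v, tf c₁ w₁ v ≠ 0 → v ∈ M₁ ∩ M₂ := by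
      intro v hv
      by_contra h'
      rw [ht₁g v, hhbar] at hv
      simp only [] at hv
      rw [if_neg h'] at hv
      exact hv rfl
    have hVeq : M₁.filter (fun v => tf c₁ w₁ v ≠ 0) = M₂.filter (fun v => tf c₂ w₂ v ≠ 0) := by
      ext v
      rw [Finset.mem_filter, Finset.mem_filter]
      constructor
      · rintro ⟨_, hv⟩
        exact ⟨(Finset.mem_inter.1 (hsupp v hv)).2, (htt v) ▸ hv⟩
      · rintro ⟨_, hv⟩
        have hv' : tf c₁ w₁ v ≠ 0 := by rw [htt v]; exact hv
        exact ⟨(Finset.mem_inter.1 (hsupp v hv')).1, hv'⟩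
    have hfun : ∀ v ∈ M₁.filter (fun v => tf c₁ w₁ v ≠ 0),
        M₁.filter (fun u => tf c₁ w₁ v ≤ tf c₁ w₁ u) =
        M₂.filter (fun u => tf c₂ w₂ v ≤ tf c₂ w₂ u) := by
      intro v hv
      have hvpos : 0 < tf c₁ w₁ v :=
        lt_of_le_of_ne (tf_nonneg hw₁0 v) (Ne.symm (Finset.mem_filter.1 hv).2)
      ext u
      rw [Finset.mem_filter, Finset.mem_filter]
      constructor
      · rintro ⟨huM, hle⟩
        have hune : tf c₁ w₁ u ≠ 0 := (lt_of_lt_of_le hvpos hle).ne'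
        exact ⟨(Finset.mem_inter.1 (hsupp u hune)).2, by rw [← htt v, ← htt u]; exact hle⟩
      · rintro ⟨huM, hle⟩
        have hle' : tf c₁ w₁ v ≤ tf c₁ w₁ u := by rw [htt v, htt u]; exact hle
        have hune : tf c₁ w₁ u ≠ 0 := (lt_of_lt_of_le hvpos hle').ne'
        exact ⟨(Finset.mem_inter.1 (hsupp u hune)).1, hle'⟩
    have hd : c₁.filter (fun A => w₁ A ≠ 0) = c₂.filter (fun A => w₂ A ≠ 0) := by
      rw [support_characterization hchain₁ hmax₁ hnon₁ hw₁0,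
        support_characterization hchain₂ hmax₂ hnon₂ hw₂0, ← hVeq]
      exact Finset.image_congr hfun
    have hmem₁ := mem_hull_support hw₁0 hw₁1
    rw [hx₁'] at hmem₁
    refine convexHull_mono ?_ hmem₁
    intro y hy
    obtain ⟨A, hA, rfl⟩ := Finset.mem_image.1 (Finset.mem_coe.1 hy)
    have hA₂ : A ∈ c₂.filter (fun A => w₂ A ≠ 0) := hd ▸ hA
    exact ⟨Finset.mem_coe.2 (Finset.mem_image_of_mem cent (Finset.filter_subset _ _ hA)),
      Finset.mem_coe.2 (Finset.mem_image_of_mem cent (Finset.filter_subset _ _ hA₂))⟩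

end SimplexApprox

namespace SimplexApprox
attribute [local instance] Classical.propDecidable
set_option linter.unusedSectionVars false
set_option linter.unusedVariables false
set_option maxHeartbeats 1000000

open Finset Metric Geometry

variable {E : Type*} [NormedAddCommGroup E] [NormedSpace ℝ E]

theorem bary_hull_subset (K : SimplicialComplex ℝ E) {s : Finset E} (hs : s ∈ (bary K).faces) :
    ∃ τ ∈ K.faces, convexHull ℝ (s : Set E) ⊆ convexHull ℝ (τ : Set E) := by
  obtain ⟨c, hcK, hchain, hcne, rfl⟩ := hs
  obtain ⟨M, hM, hmax⟩ := chain_exists_max hcne hchain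
  refine ⟨M, hcK hM, ?_⟩
  apply convexHull_min ?_ (convex_convexHull ℝ _)
  intro y hy
  obtain ⟨A, hA, rfl⟩ := Finset.mem_image.1 (Finset.mem_coe.1 hy)
  exact convexHull_mono (Finset.coe_subset.2 (hmax A hA)) (cent_mem_hull (face_nonempty (hcK hA)))

theorem exists_chain_aux :
    ∀ (N : ℕ) (σ : Finset E) (t : E → ℝ), (σ.filter (fun v => t v ≠ 0)).card ≤ N →
      (∀ v ∈ σ, 0 ≤ t v) → ∑ v ∈ σ, t v = 1 →
      ∃ c : Finset (Finset E), IsChain (· ⊆ ·) (c : Set (Finset E)) ∧ c.Nonempty ∧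
        (∀ A ∈ c, A ⊆ σ.filter (fun v => t v ≠ 0)) ∧ (∀ A ∈ c, A.Nonempty) ∧
        (∑ v ∈ σ, t v • v) ∈ convexHull ℝ ((c.image cent : Finset E) : Set E) := by
  intro N
  induction N with
  | zero =>
    intro σ t hcard h0 h1
    exfalso
    rw [Nat.le_zero, Finset.card_eq_zero] at hcard
    have hz : ∑ v ∈ σ, t v = 0 := by
      apply Finset.sum_eq_zero
      intro v hv
      by_contra h
      exact absurd (Finset.mem_filter.2 ⟨hv, h⟩) (hcard ▸ Finset.notMem_empty v)
    rw [h1] at hz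
    norm_num at hz
  | succ N ih =>
    intro σ t hcard h0 h1
    set A := σ.filter (fun v => t v ≠ 0) with hAdef
    have hAσ : A ⊆ σ := Finset.filter_subset _ _
    have hAne : A.Nonempty := by
      rw [Finset.nonempty_iff_ne_empty]
      intro h
      have hz : ∑ v ∈ σ, t v = 0 := by
        apply Finset.sum_eq_zero
        intro v hv
        by_contra h'
        exact absurd (Finset.mem_filter.2 ⟨hv, h'⟩) (by rw [← hAdef, h]; exact Finset.notMem_empty v)
      rw [h1] at hz
      norm_num at hz
    obtain ⟨v₀, hv₀A, hv₀min⟩ := Finset.exists_min_image A t hAne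
    set α := t v₀ with hα
    have hα0 : 0 < α :=
      lt_of_le_of_ne (h0 v₀ (hAσ hv₀A)) (Ne.symm (Finset.mem_filter.1 hv₀A).2)
    have hxA : ∑ v ∈ σ, t v • v = ∑ v ∈ A, t v • v := by
      symm
      apply Finset.sum_subset hAσ
      intro v hv hvA
      have ht : t v = 0 := by
        by_contra h
        exact hvA (Finset.mem_filter.2 ⟨hv, h⟩)
      rw [ht, zero_smul]
    have hsA : ∑ v ∈ A, t v = 1 := by
      rw [← h1]
      apply Finset.sum_subset hAσ
      intro v hv hvA
      by_contra h
      exact hvA (Finset.mem_filter.2 ⟨hv, h⟩)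
    have hcardA : (0:ℝ) < A.card := by exact_mod_cast hAne.card_pos
    set β := 1 - α * A.card with hβ
    have hβ0 : 0 ≤ β := by
      have hle : α * A.card ≤ ∑ v ∈ A, t v := by
        have : ∑ v ∈ A, α ≤ ∑ v ∈ A, t v := Finset.sum_le_sum fun v hv => hv₀min v hv
        rw [Finset.sum_const, nsmul_eq_mul] at this
        linarith [this]
      rw [hβ]
      linarith [hsA ▸ hle]
    have hdecomp : ∑ v ∈ A, t v • v = (α * A.card) • cent A + ∑ v ∈ A, (t v - α) • v := by
      rw [cent, smul_smul]
      have hc : α * (A.card : ℝ) * (A.card : ℝ)⁻¹ = α := by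
        field_simp
      rw [hc, Finset.smul_sum, ← Finset.sum_add_distrib]
      apply Finset.sum_congr rfl
      intro v hv
      rw [← add_smul]
      congr 1
      ring
    by_cases hβz : β = 0
    · have hsum0 : ∑ v ∈ A, (t v - α) = 0 := by
        rw [Finset.sum_sub_distrib, hsA, Finset.sum_const, nsmul_eq_mul]
        rw [hβ] at hβz
        linarith
      have hall : ∀ v ∈ A, t v - α = 0 :=
        (Finset.sum_eq_zero_iff_of_nonneg fun v hv => sub_nonneg.2 (hv₀min v hv)).1 hsum0
      have hx : ∑ v ∈ σ, t v • v = cent A := by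
        rw [hxA, hdecomp, Finset.sum_eq_zero (fun v hv => by rw [hall v hv, zero_smul]), add_zero]
        have h1' : α * A.card = 1 := by
          rw [hβ] at hβz
          linarith
        rw [h1', one_smul]
      refine ⟨{A}, ?_, Finset.singleton_nonempty _, ?_, ?_, ?_⟩
      · intro a ha b hb hab
        rw [Finset.coe_singleton, Set.mem_singleton_iff] at ha hb
        exact absurd (ha.trans hb.symm) hab
      · intro B hB
        rw [Finset.mem_singleton] at hB
        subst hB
        exact subset_rfl
      · intro B hB
        rw [Finset.mem_singleton] at hB
        subst hB
        exact hAne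
      · rw [hx, Finset.image_singleton]
        exact subset_convexHull ℝ _ (by simp)
    · have hβpos : 0 < β := lt_of_le_of_ne hβ0 (Ne.symm hβz)
      set t' : E → ℝ := fun v => if v ∈ A then (t v - α) / β else 0 with ht'
      have ht'0 : ∀ v ∈ A, 0 ≤ t' v := by
        intro v hv
        rw [ht']
        simp only [if_pos hv]
        exact div_nonneg (sub_nonneg.2 (hv₀min v hv)) hβ0
      have ht'1 : ∑ v ∈ A, t' v = 1 := by
        rw [ht']
        rw [Finset.sum_congr rfl (fun v hv => if_pos hv)]
        rw [← Finset.sum_div, Finset.sum_sub_distrib, hsA, Finset.sum_const, nsmul_eq_mul]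
        rw [hβ]
        have hβne : 1 - (A.card : ℝ) * α ≠ 0 := by rw [mul_comm]; exact hβz
        field_simp
      have hcard' : (A.filter (fun v => t' v ≠ 0)).card ≤ N := by
        have hsub : A.filter (fun v => t' v ≠ 0) ⊆ A.erase v₀ := by
          intro v hv
          rw [Finset.mem_filter] at hv
          rw [Finset.mem_erase]
          refine ⟨?_, hv.1⟩
          rintro rfl
          apply hv.2
          rw [ht']
          simp only [if_pos hv.1]
          rw [← hα, sub_self, zero_div]
        have h1' := Finset.card_le_card hsub
        have h2' := Finset.card_erase_of_mem hv₀A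
        have h3' : A.card ≤ N + 1 := hcard
        omega
      obtain ⟨c', hchain', hc'ne, hc'sub, hc'non, hc'mem⟩ := ih A t' hcard' ht'0 ht'1
      have hsubA : ∀ B ∈ c', B ⊆ A := fun B hB => (hc'sub B hB).trans (Finset.filter_subset _ _)
      refine ⟨insert A c', ?_, Finset.insert_nonempty _ _, ?_, ?_, ?_⟩
      · intro a ha b hb hab
        rw [Finset.coe_insert, Set.mem_insert_iff] at ha hb
        rcases ha with rfl | ha <;> rcases hb with rfl | hb
        · exact absurd rfl hab
        · exact Or.inr (hsubA b (Finset.mem_coe.1 hb))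
        · exact Or.inl (hsubA a (Finset.mem_coe.1 ha))
        · exact hchain' ha hb hab
      · intro B hB
        rcases Finset.mem_insert.1 hB with rfl | hB'
        · exact subset_rfl
        · exact hsubA B hB'
      · intro B hB
        rcases Finset.mem_insert.1 hB with rfl | hB'
        · exact hAne
        · exact hc'non B hB'
      · have hxdec : ∑ v ∈ σ, t v • v = (α * A.card) • cent A + β • ∑ v ∈ A, t' v • v := by
          rw [hxA, hdecomp]
          congr 1
          rw [Finset.smul_sum]
          apply Finset.sum_congr rfl
          intro v hv
          rw [ht']
          simp only [if_pos hv]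
          rw [smul_smul]
          congr 1
          field_simp
        rw [hxdec]
        have h1mem : cent A ∈ convexHull ℝ (((insert A c').image cent : Finset E) : Set E) :=
          subset_convexHull ℝ _ (Finset.mem_coe.2 (Finset.mem_image_of_mem cent (Finset.mem_insert_self _ _)))
        have h2mem : ∑ v ∈ A, t' v • v ∈ convexHull ℝ (((insert A c').image cent : Finset E) : Set E) :=
          convexHull_mono (Finset.coe_subset.2 (Finset.image_subset_image (Finset.subset_insert _ _))) hc'mem
        have hab : 0 ≤ α * A.card := by positivity
        exact (convex_convexHull ℝ _) h1mem h2mem hab hβ0 (by rw [hβ]; ring)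

theorem bary_space (K : SimplicialComplex ℝ E) : (bary K).space = K.space := by
  apply subset_antisymm
  · intro x hx
    rw [SimplicialComplex.mem_space_iff] at hx
    obtain ⟨s, hs, hxs⟩ := hx
    obtain ⟨τ, hτ, hsub⟩ := bary_hull_subset K hs
    exact SimplicialComplex.mem_space_iff.2 ⟨τ, hτ, hsub hxs⟩
  · intro x hx
    rw [SimplicialComplex.mem_space_iff] at hx
    obtain ⟨σ, hσ, hxσ⟩ := hx
    obtain ⟨tw, ht0, ht1, htx⟩ := weights_of_mem_hull hxσ
    obtain ⟨c, hchain, hcne, hcsub, hcnonempty, hcmem⟩ :=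
      exists_chain_aux (σ.filter (fun v => tw v ≠ 0)).card σ tw le_rfl ht0 ht1
    have hcK : (c : Set (Finset E)) ⊆ K.faces := fun A hA =>
      K.down_closed hσ ((hcsub A (Finset.mem_coe.1 hA)).trans (Finset.filter_subset _ _))
        (hcnonempty A (Finset.mem_coe.1 hA))
    rw [htx] at hcmem
    exact SimplicialComplex.mem_space_iff.2 ⟨c.image cent, ⟨c, hcK, hchain, hcne, rfl⟩, hcmem⟩

theorem bary_card_le (K : SimplicialComplex ℝ E) {D : ℕ} (hD : ∀ σ ∈ K.faces, σ.card ≤ D) :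
    ∀ s ∈ (bary K).faces, s.card ≤ D := by
  rintro s ⟨c, hcK, hchain, hcne, rfl⟩
  obtain ⟨M, hM, hmax⟩ := chain_exists_max hcne hchain
  have hinj : ∀ a ∈ c, ∀ b ∈ c, a.card = b.card → a = b := by
    intro a ha b hb hab
    rcases hchain.total (Finset.mem_coe.2 ha) (Finset.mem_coe.2 hb) with h | h
    · exact Finset.eq_of_subset_of_card_le h (le_of_eq hab.symm)
    · exact (Finset.eq_of_subset_of_card_le h (le_of_eq hab)).symm
  calc (c.image cent).card ≤ c.card := Finset.card_image_le
    _ = (c.image Finset.card).card := (Finset.card_image_of_injOn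
        (fun a ha b hb hab => hinj a ha b hb hab)).symm
    _ ≤ (Finset.Icc 1 M.card).card := Finset.card_le_card (by
        intro k hk
        obtain ⟨A, hA, rfl⟩ := Finset.mem_image.1 hk
        rw [Finset.mem_Icc]
        exact ⟨(face_nonempty (hcK hA)).card_pos, Finset.card_le_card (hmax A hA)⟩)
    _ ≤ M.card := by rw [Nat.card_Icc]; omega
    _ ≤ D := hD M (hcK hM)

theorem dist_cent_le {σ B : Finset E} {m : ℝ} (hBσ : B ⊆ σ) (hBne : B.Nonempty)
    (hdiam : Metric.diam (convexHull ℝ (σ : Set E)) ≤ m)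
    {p : E} (hp : p ∈ convexHull ℝ (B : Set E)) {D : ℕ} (hcard : B.card ≤ D) (hD : 1 ≤ D) :
    dist p (cent B) ≤ (1 - 1/(D:ℝ)) * m := by
  have hbdd : Bornology.IsBounded (convexHull ℝ (σ : Set E)) :=
    ((σ.finite_toSet).isCompact_convexHull ℝ).isBounded
  have hm0 : 0 ≤ m := le_trans Metric.diam_nonneg hdiam
  have hk : (0:ℝ) < B.card := by exact_mod_cast hBne.card_pos
  have hDpos : (0:ℝ) < D := by exact_mod_cast hD
  have hconv : convexHull ℝ (B : Set E) ⊆ Metric.closedBall (cent B) ((1 - 1/(D:ℝ)) * m) := by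
    apply convexHull_min ?_ (convex_closedBall _ _)
    intro v hv
    rw [Metric.mem_closedBall]
    have hvB : v ∈ B := Finset.mem_coe.1 hv
    have hrw : v - cent B = (B.card:ℝ)⁻¹ • ∑ u ∈ B, (v - u) := by
      rw [Finset.sum_sub_distrib, smul_sub, cent]
      congr 1
      rw [Finset.sum_const, ← Nat.cast_smul_eq_nsmul ℝ, smul_smul,
        inv_mul_cancel₀ (ne_of_gt hk), one_smul]
    have hdist : ∀ u ∈ B, ‖v - u‖ ≤ m := by
      intro u hu
      rw [← dist_eq_norm]
      exact le_trans (Metric.dist_le_diam_of_mem hbdd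
        (subset_convexHull ℝ _ (Finset.mem_coe.2 (hBσ hvB)))
        (subset_convexHull ℝ _ (Finset.mem_coe.2 (hBσ hu)))) hdiam
    calc dist v (cent B) = ‖v - cent B‖ := dist_eq_norm _ _
      _ = (B.card:ℝ)⁻¹ * ‖∑ u ∈ B, (v - u)‖ := by
          rw [hrw, norm_smul, Real.norm_eq_abs, abs_of_pos (by positivity)]
      _ = (B.card:ℝ)⁻¹ * ‖∑ u ∈ B.erase v, (v - u)‖ := by
          rw [Finset.sum_erase _ (by rw [sub_self])]
      _ ≤ (B.card:ℝ)⁻¹ * ∑ u ∈ B.erase v, ‖v - u‖ := by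
          apply mul_le_mul_of_nonneg_left (norm_sum_le _ _) (by positivity)
      _ ≤ (B.card:ℝ)⁻¹ * ∑ u ∈ B.erase v, m := by
          apply mul_le_mul_of_nonneg_left
            (Finset.sum_le_sum fun u hu => hdist u (Finset.mem_of_mem_erase hu)) (by positivity)
      _ = (B.card:ℝ)⁻¹ * ((B.card - 1) * m) := by
          rw [Finset.sum_const, nsmul_eq_mul, Finset.card_erase_of_mem hvB]
          congr 2
          have : (1:ℕ) ≤ B.card := hBne.card_pos
          push_cast [Nat.cast_sub this]
          ring
      _ ≤ (1 - 1/(D:ℝ)) * m := by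
          have hkD : (B.card : ℝ) ≤ D := by exact_mod_cast hcard
          have h1 : 1/(D:ℝ) ≤ 1/(B.card:ℝ) := one_div_le_one_div_of_le hk hkD
          have hinv : (B.card:ℝ)⁻¹ * (((B.card:ℝ) - 1) * m) = (1 - 1/(B.card:ℝ)) * m := by
            field_simp
          rw [hinv]
          exact mul_le_mul_of_nonneg_right (by linarith) hm0
  exact Metric.mem_closedBall.1 (hconv hp)

theorem bary_mesh (K : SimplicialComplex ℝ E) {D : ℕ} (hD1 : 1 ≤ D)
    (hD : ∀ σ ∈ K.faces, σ.card ≤ D) {m : ℝ}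
    (hm : ∀ σ ∈ K.faces, Metric.diam (convexHull ℝ (σ : Set E)) ≤ m) :
    ∀ s ∈ (bary K).faces, Metric.diam (convexHull ℝ (s : Set E)) ≤ (1 - 1/(D:ℝ)) * m := by
  rintro s hs
  obtain ⟨c, hcK, hchain, hcne, rfl⟩ := hs
  obtain ⟨M, hM, hmax⟩ := chain_exists_max hcne hchain
  have hm0 : 0 ≤ m := le_trans Metric.diam_nonneg (hm M (hcK hM))
  have hDpos : (0:ℝ) < D := by exact_mod_cast hD1
  have hr0 : 0 ≤ (1 - 1/(D:ℝ)) * m := by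
    have : 1/(D:ℝ) ≤ 1 := by
      rw [div_le_one hDpos]
      exact_mod_cast hD1
    nlinarith
  rw [convexHull_diam]
  apply Metric.diam_le_of_forall_dist_le hr0
  intro x hx y hy
  obtain ⟨A, hA, rfl⟩ := Finset.mem_image.1 (Finset.mem_coe.1 hx)
  obtain ⟨B, hB, rfl⟩ := Finset.mem_image.1 (Finset.mem_coe.1 hy)
  have key : ∀ A' B' : Finset E, A' ∈ c → B' ∈ c → A' ⊆ B' →
      dist (cent A') (cent B') ≤ (1 - 1/(D:ℝ)) * m := by
    intro A' B' hA' hB' hAB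
    apply dist_cent_le (hmax B' hB') (face_nonempty (hcK hB')) (hm M (hcK hM))
      ?_ (hD B' (hcK hB')) hD1
    exact convexHull_mono (Finset.coe_subset.2 hAB) (cent_mem_hull (face_nonempty (hcK hA')))
  rcases hchain.total (Finset.mem_coe.2 hA) (Finset.mem_coe.2 hB) with h | h
  · exact key A B hA hB h
  · rw [dist_comm]
    exact key B A hB hA h

theorem bary_finite (K : SimplicialComplex ℝ E) (h : K.faces.Finite) :
    (bary K).faces.Finite := by
  have hsub : (bary K).faces ⊆ (fun c : Finset (Finset E) => c.image cent) ''
      {c : Finset (Finset E) | (c : Set (Finset E)) ⊆ K.faces} := by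
    rintro s ⟨c, hcK, _, _, rfl⟩
    exact ⟨c, hcK, rfl⟩
  apply Set.Finite.subset ?_ hsub
  apply Set.Finite.image
  have hpre : {c : Finset (Finset E) | (c : Set (Finset E)) ⊆ K.faces} =
      (fun c : Finset (Finset E) => (c : Set (Finset E))) ⁻¹' {t : Set (Finset E) | t ⊆ K.faces} := rfl
  rw [hpre]
  exact Set.Finite.preimage (Set.injOn_of_injective Finset.coe_injective)
    h.finite_subsets

end SimplexApprox
open Geometry

/-- K' is a subdivision of K: same underlying space and every face of K' is, up to
convex hulls, contained in a face of K. -/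
def IsSubdivision {n : ℕ} (K' K : SimplicialComplex ℝ (Fin n → ℝ)) : Prop :=
  K'.space = K.space ∧
  ∀ σ ∈ K'.faces, ∃ τ ∈ K.faces,
    convexHull ℝ (σ : Set (Fin n → ℝ)) ⊆ convexHull ℝ (τ : Set (Fin n → ℝ))

namespace SimplexApprox
attribute [local instance] Classical.propDecidable
set_option linter.unusedSectionVars false
set_option linter.unusedVariables false
set_option maxHeartbeats 1000000

open Finset Metric Geometry

theorem fine_subdivision {n : ℕ} (K : SimplicialComplex ℝ (Fin n → ℝ)) (hfin : K.faces.Finite)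
    (δ : ℝ) (hδ : 0 < δ) :
    ∃ K' : SimplicialComplex ℝ (Fin n → ℝ), IsSubdivision K' K ∧ K'.faces.Finite ∧
      ∀ σ ∈ K'.faces, Metric.diam (convexHull ℝ (σ : Set (Fin n → ℝ))) ≤ δ := by
  classical
  obtain ⟨D₀, hD₀⟩ : ∃ D : ℕ, ∀ σ ∈ K.faces, σ.card ≤ D := by
    obtain ⟨D, hD⟩ := (hfin.image Finset.card).bddAbove
    exact ⟨D, fun σ hσ => hD (Set.mem_image_of_mem _ hσ)⟩
  set D := max D₀ 1 with hDdef
  have hD1 : 1 ≤ D := le_max_right _ _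
  have hD : ∀ σ ∈ K.faces, σ.card ≤ D := fun σ hσ => (hD₀ σ hσ).trans (le_max_left _ _)
  obtain ⟨m₀', hm₀'⟩ : ∃ m : ℝ, ∀ σ ∈ K.faces,
      Metric.diam (convexHull ℝ (σ : Set (Fin n → ℝ))) ≤ m := by
    obtain ⟨m, hm⟩ := (hfin.image fun σ : Finset (Fin n → ℝ) => Metric.diam (convexHull ℝ (σ : Set (Fin n → ℝ)))).bddAbove
    exact ⟨m, fun σ hσ => hm (Set.mem_image_of_mem _ hσ)⟩
  set m₀ := max m₀' 0 with hm₀def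
  have hm₀0 : 0 ≤ m₀ := le_max_right _ _
  have hm₀ : ∀ σ ∈ K.faces, Metric.diam (convexHull ℝ (σ : Set (Fin n → ℝ))) ≤ m₀ :=
    fun σ hσ => (hm₀' σ hσ).trans (le_max_left _ _)
  set r : ℝ := 1 - 1/(D:ℝ) with hrdef
  have hDpos : (0:ℝ) < D := by exact_mod_cast hD1
  have hr0 : 0 ≤ r := by
    have : 1/(D:ℝ) ≤ 1 := by
      rw [div_le_one hDpos]
      exact_mod_cast hD1
    rw [hrdef]; linarith
  have hr1 : r < 1 := by
    have : 0 < 1/(D:ℝ) := by positivity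
    rw [hrdef]; linarith
  set Ks : ℕ → SimplicialComplex ℝ (Fin n → ℝ) := fun N => Nat.rec K (fun _ K' => bary K') N
    with hKs
  have hKs0 : Ks 0 = K := rfl
  have hKsS : ∀ N, Ks (N+1) = bary (Ks N) := fun N => rfl
  have hinv : ∀ N : ℕ, (Ks N).space = K.space ∧ (Ks N).faces.Finite ∧
      (∀ σ ∈ (Ks N).faces, σ.card ≤ D) ∧
      (∀ σ ∈ (Ks N).faces, ∃ τ ∈ K.faces,
        convexHull ℝ (σ : Set (Fin n → ℝ)) ⊆ convexHull ℝ (τ : Set (Fin n → ℝ))) ∧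
      (∀ σ ∈ (Ks N).faces, Metric.diam (convexHull ℝ (σ : Set (Fin n → ℝ))) ≤ r^N * m₀) := by
    intro N
    induction N with
    | zero =>
      refine ⟨rfl, hfin, hD, fun σ hσ => ⟨σ, hσ, subset_rfl⟩, ?_⟩
      intro σ hσ
      rw [pow_zero, one_mul]
      exact hm₀ σ hσ
    | succ N ih =>
      obtain ⟨ihsp, ihfin, ihcard, ihsub, ihmesh⟩ := ih
      refine ⟨?_, ?_, ?_, ?_, ?_⟩
      · rw [hKsS, bary_space, ihsp]
      · rw [hKsS]; exact bary_finite _ ihfin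
      · rw [hKsS]; exact bary_card_le _ ihcard
      · rw [hKsS]
        intro σ hσ
        obtain ⟨τ, hτ, hsub⟩ := bary_hull_subset _ hσ
        obtain ⟨τ', hτ', hsub'⟩ := ihsub τ hτ
        exact ⟨τ', hτ', hsub.trans hsub'⟩
      · rw [hKsS]
        intro σ hσ
        have := bary_mesh (Ks N) hD1 ihcard ihmesh σ hσ
        calc Metric.diam (convexHull ℝ (σ : Set (Fin n → ℝ))) ≤ r * (r^N * m₀) := this
          _ = r^(N+1) * m₀ := by ring
  obtain ⟨N, hN⟩ := exists_pow_lt_of_lt_one (x := δ/(m₀+1)) (by positivity) hr1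
  refine ⟨Ks N, ⟨(hinv N).1, (hinv N).2.2.2.1⟩, (hinv N).2.1, ?_⟩
  intro σ hσ
  have h1 := (hinv N).2.2.2.2 σ hσ
  have h2 : r^N * m₀ ≤ (δ/(m₀+1)) * m₀ :=
    mul_le_mul_of_nonneg_right (le_of_lt hN) hm₀0
  have h3 : (δ/(m₀+1)) * m₀ ≤ δ := by
    rw [div_mul_eq_mul_div, div_le_iff₀ (by positivity)]
    nlinarith
  linarith

end SimplexApprox
namespace SimplexApprox
attribute [local instance] Classical.propDecidable
set_option linter.unusedSectionVars false
set_option linter.unusedVariables false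
set_option maxHeartbeats 1000000

open Finset Metric Geometry

theorem space_compact {n : ℕ} (K : SimplicialComplex ℝ (Fin n → ℝ)) (hfin : K.faces.Finite) :
    IsCompact K.space :=
  hfin.isCompact_biUnion fun s _ => (s.finite_toSet).isCompact_convexHull ℝ

theorem exists_affine_extension {E F : Type*} [AddCommGroup E] [Module ℝ E]
    [AddCommGroup F] [Module ℝ F] (s : Finset E)
    (hs : AffineIndependent ℝ ((↑) : s → E)) (f : E → F) :
    ∃ A : E →ᵃ[ℝ] F, ∀ v ∈ s, A v = f v := by
  classical
  rcases s.eq_empty_or_nonempty with rfl | ⟨v₀, hv₀⟩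
  · exact ⟨AffineMap.const ℝ E 0, by simp⟩
  · have hli : LinearIndependent ℝ
        (fun i : {x : ↥s // x ≠ (⟨v₀, hv₀⟩ : ↥s)} => ((i : ↥s) : E) - v₀) := by
      have h := (affineIndependent_iff_linearIndependent_vsub ℝ ((↑) : s → E)
        (⟨v₀, hv₀⟩ : ↥s)).1 hs
      simpa [vsub_eq_sub] using h
    have hliS : LinearIndepOn ℝ id (Set.range (fun i : {x : ↥s // x ≠ (⟨v₀, hv₀⟩ : ↥s)} =>
          ((i : ↥s) : E) - v₀)) := (linearIndepOn_id_range_iff hli.injective).2 hli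
    set S := Set.range (fun i : {x : ↥s // x ≠ (⟨v₀, hv₀⟩ : ↥s)} => ((i : ↥s) : E) - v₀) with hS
    set b := Module.Basis.extend hliS with hb
    set g : ↥(hliS.extend (Set.subset_univ S)) → F :=
      fun i => if (↑i : E) ∈ S then f ((↑i : E) + v₀) - f v₀ else 0 with hg
    set T : E →ₗ[ℝ] F := b.constr ℝ g with hT
    refine ⟨⟨fun x => T (x - v₀) + f v₀, T, ?_⟩, ?_⟩
    · intro p v
      show T (v + p - v₀) + f v₀ = T v + (T (p - v₀) + f v₀)
      rw [add_sub_assoc, map_add]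
      abel
    · intro v hv
      show T (v - v₀) + f v₀ = f v
      rcases eq_or_ne v v₀ with rfl | hne
      · rw [sub_self, map_zero, zero_add]
      · have hmem : (v - v₀) ∈ S :=
          ⟨⟨⟨v, hv⟩, by simp [Subtype.ext_iff, hne]⟩, rfl⟩
        have hmem' : (v - v₀) ∈ hliS.extend (Set.subset_univ S) :=
          hliS.subset_extend _ hmem
        have hbv : b ⟨v - v₀, hmem'⟩ = v - v₀ := Module.Basis.extend_apply_self hliS ⟨v - v₀, hmem'⟩
        have hc := b.constr_basis ℝ g ⟨v - v₀, hmem'⟩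
        rw [hbv] at hc
        show ((b.constr ℝ) g) (v - v₀) + f v₀ = f v
        rw [hc, hg]
        simp only [if_pos hmem, sub_add_cancel]

theorem affine_eqOn_convexHull {E F : Type*} [AddCommGroup E] [Module ℝ E]
    [AddCommGroup F] [Module ℝ F] {A B : E →ᵃ[ℝ] F} {s : Set E}
    (h : ∀ v ∈ s, A v = B v) : ∀ x ∈ convexHull ℝ s, A x = B x := by
  have hsub : convexHull ℝ s ⊆ {x | A x = B x} := by
    apply convexHull_min h
    intro x hx y hy a b ha hb hab
    have hx' : A x = B x := hx
    have hy' : A y = B y := hy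
    show A (a • x + b • y) = B (a • x + b • y)
    have hline : a • x + b • y = AffineMap.lineMap x y b := by
      rw [AffineMap.lineMap_apply_module]
      have : a = 1 - b := by linarith
      rw [this]
    rw [hline, AffineMap.apply_lineMap, AffineMap.apply_lineMap, hx', hy']
  exact fun x hx => hsub hx

theorem star_cover {m : ℕ} (L' : SimplicialComplex ℝ (Fin m → ℝ)) {q : Fin m → ℝ}
    (hq : q ∈ L'.space) :
    ∃ w ∈ L'.vertices, ∀ ν ∈ L'.faces, q ∈ convexHull ℝ (ν : Set (Fin m → ℝ)) → w ∈ ν := by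
  classical
  have hex : ∃ k : ℕ, ∃ μ ∈ L'.faces, q ∈ convexHull ℝ (μ : Set (Fin m → ℝ)) ∧ μ.card = k := by
    rw [SimplicialComplex.mem_space_iff] at hq
    obtain ⟨μ, hμ, hqμ⟩ := hq
    exact ⟨μ.card, μ, hμ, hqμ, rfl⟩
  obtain ⟨μ, hμ, hqμ, hcard⟩ := Nat.find_spec hex
  obtain ⟨w, hwμ⟩ := face_nonempty hμ
  refine ⟨w, SimplicialComplex.mem_vertices.2
    (L'.down_closed hμ (Finset.singleton_subset_iff.2 hwμ) (Finset.singleton_nonempty _)), ?_⟩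
  intro ν hν hqν
  by_contra hwv
  have hsub := L'.inter_subset_convexHull hμ hν ⟨hqμ, hqν⟩
  rw [← Finset.coe_inter] at hsub
  have hne : (μ ∩ ν).Nonempty := by
    rw [Finset.nonempty_iff_ne_empty]
    intro h
    rw [h] at hsub
    simp at hsub
  have hface : μ ∩ ν ∈ L'.faces :=
    L'.down_closed hμ Finset.inter_subset_left hne
  have hss : μ ∩ ν ⊂ μ := by
    rw [Finset.ssubset_iff_of_subset Finset.inter_subset_left]
    exact ⟨w, hwμ, fun h => hwv (Finset.mem_inter.1 h).2⟩
  have hlt : (μ ∩ ν).card < μ.card := Finset.card_lt_card hss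
  exact Nat.find_min hex (hcard ▸ hlt) ⟨μ ∩ ν, hface, hsub, rfl⟩

end SimplexApprox
open Geometry

set_option maxHeartbeats 1000000 in
/-- Proposition 5.3: a continuous map g between compact metric spaces
homeomorphic to the spaces of finite simplicial complexes K and L can be ε-approximated
by (the pullback of) a simplicial map between subdivisions of K and L. -/
theorem simplicial_approximation_triangulable (n m : ℕ)
    (X : Type*) [MetricSpace X] [CompactSpace X]
    (Y : Type*) [MetricSpace Y] [CompactSpace Y]
    (K : SimplicialComplex ℝ (Fin n → ℝ)) (hKfin : K.faces.Finite)
    (L : SimplicialComplex ℝ (Fin m → ℝ)) (hLfin : L.faces.Finite)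
    (τK : X ≃ₜ K.space) (τL : Y ≃ₜ L.space)
    (g : X → Y) (hg : Continuous g) (ε : ℝ) (hε : 0 < ε) :
    ∃ (K' : SimplicialComplex ℝ (Fin n → ℝ)) (L' : SimplicialComplex ℝ (Fin m → ℝ))
      (F : (Fin n → ℝ) → (Fin m → ℝ)),
      IsSubdivision K' K ∧ IsSubdivision L' L ∧ IsSimplicialMap K' L' F ∧
      ∃ h : ∀ x : X, F (τK x : Fin n → ℝ) ∈ L.space,
        ∀ x : X, dist (g x) (τL.symm ⟨F (τK x : Fin n → ℝ), h x⟩) ≤ ε := by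
  classical
  haveI hcomK : CompactSpace ↥K.space :=
    isCompact_iff_compactSpace.1 (SimplexApprox.space_compact K hKfin)
  haveI hcomL : CompactSpace ↥L.space :=
    isCompact_iff_compactSpace.1 (SimplexApprox.space_compact L hLfin)
  obtain ⟨δ₁, hδ₁pos, hδ₁⟩ := Metric.uniformContinuous_iff.1
    (CompactSpace.uniformContinuous_of_continuous τL.symm.continuous) ε hε
  obtain ⟨L', hL'sub, hL'fin, hL'mesh⟩ :=
    SimplexApprox.fine_subdivision L hLfin (δ₁/3) (by positivity)
  set bad : (Fin m → ℝ) → Set (Fin m → ℝ) := fun w =>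
    ⋃ μ ∈ {μ ∈ L'.faces | w ∉ μ}, convexHull ℝ (μ : Set (Fin m → ℝ)) with hbad
  have hbadclosed : ∀ w, IsClosed (bad w) := by
    intro w
    apply Set.Finite.isClosed_biUnion
    · exact hL'fin.subset (fun μ hμ => hμ.1)
    · intro μ _
      exact ((μ.finite_toSet).isCompact_convexHull ℝ).isClosed
  have hstar : ∀ w q, q ∉ bad w → ∀ ν ∈ L'.faces,
      q ∈ convexHull ℝ (ν : Set (Fin m → ℝ)) → w ∈ ν := by
    intro w q hq ν hν hqν
    by_contra hwv
    exact hq (Set.mem_biUnion (⟨hν, hwv⟩ : ν ∈ {μ ∈ L'.faces | w ∉ μ}) hqν)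
  set U : (Fin m → ℝ) → Set X := fun w => g ⁻¹' (τL ⁻¹' (Subtype.val ⁻¹' (bad w)ᶜ)) with hU
  have hUopen : ∀ w, IsOpen (U w) := fun w =>
    ((((hbadclosed w).isOpen_compl).preimage continuous_subtype_val).preimage
      τL.continuous).preimage hg
  have hcover : (Set.univ : Set X) ⊆ ⋃ i : ↥L'.vertices, U ↑i := by
    intro x _
    have hq : (↑(τL (g x)) : Fin m → ℝ) ∈ L'.space := by
      rw [hL'sub.1]
      exact (τL (g x)).2
    obtain ⟨w, hwvert, hwprop⟩ := SimplexApprox.star_cover L' hq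
    have hnotbad : (↑(τL (g x)) : Fin m → ℝ) ∉ bad w := by
      intro hmem
      obtain ⟨μ, hμ, hqμ⟩ := Set.mem_iUnion₂.1 hmem
      exact hμ.2 (hwprop μ hμ.1 hqμ)
    exact Set.mem_iUnion.2 ⟨⟨w, hwvert⟩, hnotbad⟩
  obtain ⟨δ₂, hδ₂pos, hleb⟩ := lebesgue_number_lemma_of_metric
    (c := fun i : ↥L'.vertices => U ↑i) isCompact_univ (fun i => hUopen ↑i) hcover
  obtain ⟨δ₃, hδ₃pos, hδ₃⟩ := Metric.uniformContinuous_iff.1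
    (CompactSpace.uniformContinuous_of_continuous τK.symm.continuous) δ₂ hδ₂pos
  obtain ⟨K', hK'sub, hK'fin, hK'mesh⟩ :=
    SimplexApprox.fine_subdivision K hKfin (δ₃/2) (by positivity)
  have hvsp : ∀ v ∈ K'.vertices, v ∈ K.space := fun v hv => by
    rw [← hK'sub.1]
    exact SimplicialComplex.vertices_subset_space hv
  have hkey : ∀ v, v ∈ K'.vertices → ∃ wv, wv ∈ L'.vertices ∧
      ∀ x : X, dist ((τK x : Fin n → ℝ)) v < δ₃ →
        (↑(τL (g x)) : Fin m → ℝ) ∉ bad wv := by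
    intro v hv
    obtain ⟨i, hball⟩ := hleb (τK.symm ⟨v, hvsp v hv⟩) (Set.mem_univ _)
    refine ⟨↑i, i.2, ?_⟩
    intro x hx
    have hdist : dist x (τK.symm ⟨v, hvsp v hv⟩) < δ₂ := by
      have h := hδ₃ (a := τK x) (b := ⟨v, hvsp v hv⟩) (by rw [Subtype.dist_eq]; exact hx)
      rwa [τK.symm_apply_apply] at h
    exact hball (Metric.mem_ball.2 hdist)
  set w : (Fin n → ℝ) → (Fin m → ℝ) := fun v =>
    if hv : v ∈ K'.vertices then (hkey v hv).choose else 0 with hw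
  have hwvert : ∀ v ∈ K'.vertices, w v ∈ L'.vertices := by
    intro v hv
    rw [hw]
    simp only [dif_pos hv]
    exact (hkey v hv).choose_spec.1
  have hwprop : ∀ v ∈ K'.vertices, ∀ x : X, dist ((τK x : Fin n → ℝ)) v < δ₃ →
      (↑(τL (g x)) : Fin m → ℝ) ∉ bad (w v) := by
    intro v hv
    rw [hw]
    simp only [dif_pos hv]
    exact (hkey v hv).choose_spec.2
  have hfacevert : ∀ σ ∈ K'.faces, ∀ v ∈ σ, v ∈ K'.vertices := by
    intro σ hσ v hv
    exact SimplicialComplex.mem_vertices.2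
      (K'.down_closed hσ (Finset.singleton_subset_iff.2 hv) (Finset.singleton_nonempty _))
  have hface : ∀ σ ∈ K'.faces, ∀ x : X,
      (τK x : Fin n → ℝ) ∈ convexHull ℝ (σ : Set (Fin n → ℝ)) →
      ∃ ν ∈ L'.faces, σ.image w ⊆ ν ∧
        (↑(τL (g x)) : Fin m → ℝ) ∈ convexHull ℝ (ν : Set (Fin m → ℝ)) := by
    intro σ hσ x hx
    have hq : (↑(τL (g x)) : Fin m → ℝ) ∈ L'.space := by
      rw [hL'sub.1]
      exact (τL (g x)).2
    rw [SimplicialComplex.mem_space_iff] at hq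
    obtain ⟨ν, hν, hqν⟩ := hq
    refine ⟨ν, hν, ?_, hqν⟩
    intro y hy
    obtain ⟨v, hvσ, rfl⟩ := Finset.mem_image.1 hy
    have hbdd : Bornology.IsBounded (convexHull ℝ (σ : Set (Fin n → ℝ))) :=
      ((σ.finite_toSet).isCompact_convexHull ℝ).isBounded
    have hvhull : v ∈ convexHull ℝ (σ : Set (Fin n → ℝ)) :=
      subset_convexHull ℝ _ (Finset.mem_coe.2 hvσ)
    have hdist : dist ((τK x : Fin n → ℝ)) v < δ₃ :=
      lt_of_le_of_lt (le_trans (Metric.dist_le_diam_of_mem hbdd hx hvhull)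
        (hK'mesh σ hσ)) (by linarith)
    exact hstar _ _ (hwprop v (hfacevert σ hσ v hvσ) x hdist) ν hν hqν
  have hfaceface : ∀ σ ∈ K'.faces, σ.image w ∈ L'.faces := by
    intro σ hσ
    have hne := SimplexApprox.face_nonempty hσ
    obtain ⟨v, hv⟩ := hne
    have hpsp : v ∈ K.space := by
      rw [← hK'sub.1]
      exact SimplicialComplex.convexHull_subset_space hσ
        (subset_convexHull ℝ _ (Finset.mem_coe.2 hv))
    have hτKx : (τK (τK.symm ⟨v, hpsp⟩) : Fin n → ℝ) = v := by
      rw [τK.apply_symm_apply]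
    obtain ⟨ν, hν, hsub, _⟩ := hface σ hσ (τK.symm ⟨v, hpsp⟩)
      (by rw [hτKx]; exact subset_convexHull ℝ _ (Finset.mem_coe.2 hv))
    exact L'.down_closed hν hsub
      (Finset.Nonempty.image ⟨v, hv⟩ w)
  have hAσ : ∀ σ, σ ∈ K'.faces →
      ∃ A : (Fin n → ℝ) →ᵃ[ℝ] (Fin m → ℝ), ∀ v ∈ σ, A v = w v :=
    fun σ hσ => SimplexApprox.exists_affine_extension σ (K'.indep hσ) w
  set Amap : Finset (Fin n → ℝ) → ((Fin n → ℝ) →ᵃ[ℝ] (Fin m → ℝ)) := fun σ =>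
    if hσ : σ ∈ K'.faces then (hAσ σ hσ).choose else AffineMap.const ℝ _ 0 with hAmap
  have hAval : ∀ σ ∈ K'.faces, ∀ v ∈ σ, Amap σ v = w v := by
    intro σ hσ v hv
    rw [hAmap]
    simp only [dif_pos hσ]
    exact (hAσ σ hσ).choose_spec v hv
  have hconsist : ∀ σ ∈ K'.faces, ∀ σ' ∈ K'.faces, ∀ p,
      p ∈ convexHull ℝ (σ : Set (Fin n → ℝ)) → p ∈ convexHull ℝ (σ' : Set (Fin n → ℝ)) →
      Amap σ p = Amap σ' p := by
    intro σ hσ σ' hσ' p hp hp'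
    have hinter := K'.inter_subset_convexHull hσ hσ' ⟨hp, hp'⟩
    rw [← Finset.coe_inter] at hinter
    have heq : ∀ u ∈ ((σ ∩ σ' : Finset _) : Set (Fin n → ℝ)), Amap σ u = Amap σ' u := by
      intro u hu
      rw [Finset.mem_coe, Finset.mem_inter] at hu
      rw [hAval σ hσ u hu.1, hAval σ' hσ' u hu.2]
    exact SimplexApprox.affine_eqOn_convexHull heq p hinter
  set F : (Fin n → ℝ) → (Fin m → ℝ) := fun p =>
    if hp : p ∈ K'.space then Amap (SimplicialComplex.mem_space_iff.1 hp).choose p else 0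
    with hF
  have hFeq : ∀ σ ∈ K'.faces, ∀ p ∈ convexHull ℝ (σ : Set (Fin n → ℝ)), F p = Amap σ p := by
    intro σ hσ p hp
    have hpsp : p ∈ K'.space := SimplicialComplex.convexHull_subset_space hσ hp
    rw [hF]
    simp only [dif_pos hpsp]
    obtain ⟨hσ₀, hp₀⟩ := (SimplicialComplex.mem_space_iff.1 hpsp).choose_spec
    exact hconsist _ hσ₀ σ hσ p hp₀ hp
  have hFvert : ∀ v ∈ K'.vertices, F v = w v := by
    intro v hv
    have hσ : {v} ∈ K'.faces := SimplicialComplex.mem_vertices.1 hv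
    have h := hFeq {v} hσ v (subset_convexHull ℝ _ (by simp))
    rw [h, hAval {v} hσ v (Finset.mem_singleton_self v)]
  have himgface : ∀ σ ∈ K'.faces,
      F '' (convexHull ℝ (σ : Set (Fin n → ℝ))) ⊆
        convexHull ℝ ((σ.image w : Finset (Fin m → ℝ)) : Set (Fin m → ℝ)) := by
    intro σ hσ
    rintro y ⟨p, hp, rfl⟩
    rw [hFeq σ hσ p hp]
    have h1 : (Amap σ) '' (convexHull ℝ (σ : Set (Fin n → ℝ))) =
        convexHull ℝ ((Amap σ) '' (σ : Set (Fin n → ℝ))) :=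
      AffineMap.image_convexHull _ _
    have h2 : (Amap σ) '' (σ : Set (Fin n → ℝ)) =
        ((σ.image w : Finset (Fin m → ℝ)) : Set (Fin m → ℝ)) := by
      rw [Finset.coe_image]
      exact Set.image_congr fun v hv => hAval σ hσ v (Finset.mem_coe.1 hv)
    have h3 := Set.mem_image_of_mem (Amap σ) hp
    rw [h1, h2] at h3
    exact h3
  have hmemface : ∀ x : X, ∃ σ ∈ K'.faces,
      (τK x : Fin n → ℝ) ∈ convexHull ℝ (σ : Set (Fin n → ℝ)) := by
    intro x
    have hx : (τK x : Fin n → ℝ) ∈ K'.space := by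
      rw [hK'sub.1]
      exact (τK x).2
    exact SimplicialComplex.mem_space_iff.1 hx
  have hFspace : ∀ x : X, F (τK x : Fin n → ℝ) ∈ L.space := by
    intro x
    obtain ⟨σ, hσ, hp⟩ := hmemface x
    have h := himgface σ hσ (Set.mem_image_of_mem F hp)
    rw [← hL'sub.1]
    exact SimplicialComplex.convexHull_subset_space (hfaceface σ hσ) h
  refine ⟨K', L', F, hK'sub, hL'sub,
    ⟨fun σ hσ => ⟨Amap σ, hFeq σ hσ⟩,
     fun v hv => by rw [hFvert v hv]; exact hwvert v hv,
     fun σ hσ => ⟨σ.image w, hfaceface σ hσ, himgface σ hσ⟩⟩,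
    hFspace, ?_⟩
  intro x
  obtain ⟨σ, hσ, hp⟩ := hmemface x
  obtain ⟨v, hvσ⟩ := SimplexApprox.face_nonempty hσ
  obtain ⟨ν, hν, himgν, hqν⟩ := hface σ hσ x hp
  have hFp : F (τK x : Fin n → ℝ) ∈
      convexHull ℝ ((σ.image w : Finset (Fin m → ℝ)) : Set (Fin m → ℝ)) :=
    himgface σ hσ (Set.mem_image_of_mem F hp)
  have hwv1 : w v ∈ convexHull ℝ ((σ.image w : Finset (Fin m → ℝ)) : Set (Fin m → ℝ)) :=
    subset_convexHull ℝ _ (Finset.mem_coe.2 (Finset.mem_image_of_mem w hvσ))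
  have hwv2 : w v ∈ convexHull ℝ (ν : Set (Fin m → ℝ)) :=
    subset_convexHull ℝ _ (Finset.mem_coe.2 (himgν (Finset.mem_image_of_mem w hvσ)))
  have hb1 : Bornology.IsBounded
      (convexHull ℝ ((σ.image w : Finset (Fin m → ℝ)) : Set (Fin m → ℝ))) :=
    (((σ.image w).finite_toSet).isCompact_convexHull ℝ).isBounded
  have hb2 : Bornology.IsBounded (convexHull ℝ (ν : Set (Fin m → ℝ))) :=
    ((ν.finite_toSet).isCompact_convexHull ℝ).isBounded
  have hd1 : dist (F (τK x : Fin n → ℝ)) (w v) ≤ δ₁/3 :=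
    le_trans (Metric.dist_le_diam_of_mem hb1 hFp hwv1) (hL'mesh _ (hfaceface σ hσ))
  have hd2 : dist (↑(τL (g x)) : Fin m → ℝ) (w v) ≤ δ₁/3 :=
    le_trans (Metric.dist_le_diam_of_mem hb2 hqν hwv2) (hL'mesh ν hν)
  have hd : dist (F (τK x : Fin n → ℝ)) (↑(τL (g x)) : Fin m → ℝ) < δ₁ := by
    calc dist (F (τK x : Fin n → ℝ)) (↑(τL (g x)) : Fin m → ℝ)
        ≤ dist (F (τK x : Fin n → ℝ)) (w v) + dist (w v) (↑(τL (g x)) : Fin m → ℝ) :=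
          dist_triangle _ _ _
      _ = dist (F (τK x : Fin n → ℝ)) (w v) + dist (↑(τL (g x)) : Fin m → ℝ) (w v) := by
          rw [dist_comm (w v)]
      _ ≤ δ₁/3 + δ₁/3 := add_le_add hd1 hd2
      _ < δ₁ := by linarith
  have hfinal := hδ₁ (a := ⟨F (τK x : Fin n → ℝ), hFspace x⟩) (b := τL (g x))
    (by rw [Subtype.dist_eq]; exact hd)
  rw [τL.symm_apply_apply] at hfinal
  rw [dist_comm] at hfinal
  exact le_of_lt hfinal
end

section
/- (Theorem 5.4) Let X and Y be compact metric spaces, K a finite simplicial complex in ℝⁿ that is pure n-dimensional (every face of K is contained in a face consisting of n+1 points forming an affine basis of ℝⁿ), L a finite simplicial complex in ℝᵐ, and τ_K : X ≃ₜ K.space and τ_L : Y ≃ₜ L.space homeomorphisms. Let g : X → Y be continuous and ε > 0. Then there exist k ≥ 1, affine bases σ_1, …, σ_k of ℝⁿ whose convex hulls cover K.space, and affine maps A_1, …, A_k : ℝⁿ → ℝᵐ such that the two-hidden-layer feed-forward network N of the paper's architecture determined by the σ_i and A_i maps K.space into L.space and satisfies dist(g(x), τ_L.symm (N (τ_K x)))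 ≤ ε for every x ∈ X. -/
open scoped BigOperators
open Geometry

section Aux

open Set Metric

/-- carrier: a minimal face whose hull contains y. -/
lemma exists_carrier {m : ℕ} (L : SimplicialComplex ℝ (Fin m → ℝ)) (hLfin : L.faces.Finite)
    {y : Fin m → ℝ} (hy : y ∈ L.space) :
    ∃ c ∈ L.faces, y ∈ convexHull ℝ (c : Set (Fin m → ℝ)) ∧
      ∀ τ ∈ L.faces, y ∈ convexHull ℝ (τ : Set (Fin m → ℝ)) → c ⊆ τ := by
  classical
  obtain ⟨s, hs, hys⟩ := SimplicialComplex.mem_space_iff.1 hy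
  set S : Set (Finset (Fin m → ℝ)) :=
    {u | u ∈ L.faces ∧ y ∈ convexHull ℝ (u : Set (Fin m → ℝ))} with hS
  have hSfin : S.Finite := hLfin.subset fun u hu => hu.1
  obtain ⟨c, hcS, hmin⟩ := Set.exists_min_image S (fun u => u.card) hSfin ⟨s, hs, hys⟩
  refine ⟨c, hcS.1, hcS.2, fun τ hτ hyτ => ?_⟩
  have h1 : y ∈ convexHull ℝ ((c ∩ τ : Finset (Fin m → ℝ)) : Set (Fin m → ℝ)) := by
    have := L.inter_subset_convexHull hcS.1 hτ ⟨hcS.2, hyτ⟩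
    simpa [Finset.coe_inter] using this
  have hne : (c ∩ τ : Finset (Fin m → ℝ)) ≠ ∅ := by
    intro h
    rw [h] at h1
    simpa using h1
  have hface : (c ∩ τ : Finset (Fin m → ℝ)) ∈ L.faces :=
    L.down_closed hcS.1 Finset.inter_subset_left (Finset.nonempty_iff_ne_empty.2 hne)
  have hcard : c.card ≤ (c ∩ τ).card := hmin _ ⟨hface, h1⟩
  have hceq : c ∩ τ = c := Finset.eq_of_subset_of_card_le Finset.inter_subset_left hcard
  intro z hz
  rw [← hceq] at hz
  exact (Finset.mem_inter.1 hz).2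

lemma simplexIndicator_eq_ite {n : ℕ} (σ : AffineBasis (Fin (n + 1)) ℝ (Fin n → ℝ))
    (x : Fin n → ℝ) [Decidable (x ∈ convexHull ℝ (Set.range ⇑σ))] :
    simplexIndicator σ x = if x ∈ convexHull ℝ (Set.range ⇑σ) then 1 else 0 := by
  unfold simplexIndicator
  refine if_congr ?_ rfl rfl
  rw [σ.convexHull_eq_nonneg_coord]
  exact Iff.rfl

/-- a scaled and translated affine equivalence `y ↦ v + r • y`. -/
noncomputable def scaleShift {n : ℕ} (r : ℝ) (hr : r ≠ 0) (v : Fin n → ℝ) :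
    (Fin n → ℝ) ≃ᵃ[ℝ] (Fin n → ℝ) :=
  (LinearEquiv.smulOfNeZero ℝ (Fin n → ℝ) r hr).toAffineEquiv.trans
    (AffineEquiv.constVAdd ℝ (Fin n → ℝ) v)

lemma scaleShift_apply {n : ℕ} (r : ℝ) (hr : r ≠ 0) (v y : Fin n → ℝ) :
    scaleShift r hr v y = v + r • y := rfl

/-- scaled copy of an affine basis. -/
noncomputable def scaledBasis {n : ℕ} (b : AffineBasis (Fin (n + 1)) ℝ (Fin n → ℝ))
    (r : ℝ) (hr : r ≠ 0) (v : Fin n → ℝ) : AffineBasis (Fin (n + 1)) ℝ (Fin n → ℝ) :=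
  ⟨⇑(scaleShift r hr v) ∘ ⇑b,
    b.ind.map' (scaleShift r hr v).toAffineMap (scaleShift r hr v).injective,
    by
      rw [Set.range_comp]
      exact ((scaleShift r hr v).span_eq_top_iff).1 b.tot⟩

lemma scaledBasis_range {n : ℕ} (b : AffineBasis (Fin (n + 1)) ℝ (Fin n → ℝ))
    (r : ℝ) (hr : r ≠ 0) (v : Fin n → ℝ) :
    Set.range ⇑(scaledBasis b r hr v) = (scaleShift r hr v) '' Set.range ⇑b := by
  show Set.range (⇑(scaleShift r hr v) ∘ ⇑b) = _
  rw [Set.range_comp]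

lemma scaledBasis_convexHull {n : ℕ} (b : AffineBasis (Fin (n + 1)) ℝ (Fin n → ℝ))
    (r : ℝ) (hr : r ≠ 0) (v : Fin n → ℝ) :
    convexHull ℝ (Set.range ⇑(scaledBasis b r hr v)) =
      (scaleShift r hr v) '' convexHull ℝ (Set.range ⇑b) := by
  rw [scaledBasis_range]
  exact ((scaleShift r hr v).toAffineMap.image_convexHull (Set.range ⇑b)).symm

noncomputable def baseBasis (n : ℕ) : AffineBasis (Fin (n + 1)) ℝ (Fin n → ℝ) :=
  (AffineBasis.exists_affineBasis_of_finiteDimensional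
    (ι := Fin (n + 1)) (k := ℝ) (P := Fin n → ℝ)
    (by simp [Module.finrank_fin_fun])).some

end Aux

/-- Theorem 5.4: a continuous map g between compact metric spaces
triangulated by a finite pure complex K in ℝⁿ and a finite complex L in ℝᵐ can be
ε-approximated by (the pullback of) a two-hidden-layer feed-forward network of the
paper's architecture mapping K.space into L.space. -/
theorem universal_approximation_triangulable (n m : ℕ)
    (X : Type*) [MetricSpace X] [CompactSpace X]
    (Y : Type*) [MetricSpace Y] [CompactSpace Y]
    (K : SimplicialComplex ℝ (Fin n → ℝ)) (hKfin : K.faces.Finite)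
    (hKpure : IsPureComplex K)
    (L : SimplicialComplex ℝ (Fin m → ℝ)) (hLfin : L.faces.Finite)
    (τK : X ≃ₜ K.space) (τL : Y ≃ₜ L.space)
    (g : X → Y) (hg : Continuous g) (ε : ℝ) (hε : 0 < ε) :
    ∃ (k : ℕ) (_ : 1 ≤ k) (σ : Fin k → AffineBasis (Fin (n + 1)) ℝ (Fin n → ℝ))
      (A : Fin k → ((Fin n → ℝ) →ᵃ[ℝ] (Fin m → ℝ))),
      K.space ⊆ (⋃ i, convexHull ℝ (Set.range ⇑(σ i))) ∧
      (∀ x ∈ K.space, paperNetwork σ A x ∈ L.space) ∧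
      ∃ h : ∀ x : X, paperNetwork σ A (τK x : Fin n → ℝ) ∈ L.space,
        ∀ x : X, dist (g x) (τL.symm ⟨paperNetwork σ A (τK x : Fin n → ℝ), h x⟩) ≤ ε := by
  classical
  by_cases hKsp : K.space.Nonempty
  case neg =>
    have hKempty : K.space = ∅ := Set.not_nonempty_iff_eq_empty.1 hKsp
    haveI hKe : IsEmpty ↥K.space := by rw [hKempty]; exact Set.isEmpty_coe_sort.2 rfl
    haveI hXe : IsEmpty X := τK.toEquiv.isEmpty
    refine ⟨1, le_refl 1, fun _ => baseBasis n, fun _ => AffineMap.const ℝ (Fin n → ℝ) 0,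
      ?_, ?_, fun x => (IsEmpty.elim hXe x), fun x => (IsEmpty.elim hXe x)⟩
    · rw [hKempty]; exact Set.empty_subset _
    · rw [hKempty]; intro x hx; exact absurd hx (Set.notMem_empty x)
  case pos =>
  -- compactness
  have hKcomp : IsCompact K.space :=
    hKfin.isCompact_biUnion fun s _ => s.finite_toSet.isCompact_convexHull ℝ
  have hLcomp : IsCompact L.space :=
    hLfin.isCompact_biUnion fun s _ => s.finite_toSet.isCompact_convexHull ℝ
  haveI : CompactSpace ↥L.space := isCompact_iff_compactSpace.1 hLcomp
  -- modulus of continuity for τL.symm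
  have hUC : UniformContinuous fun y : ↥L.space => τL.symm y :=
    CompactSpace.uniformContinuous_of_continuous τL.symm.continuous
  obtain ⟨δ₀, hδ₀pos, hδ₀⟩ := Metric.uniformContinuous_iff.1 hUC ε hε
  set ε' : ℝ := δ₀ / 2 with hε'def
  have hε'pos : 0 < ε' := by positivity
  -- target map
  set yv : ↥K.space → (Fin m → ℝ) := fun p => ((τL (g (τK.symm p)) : ↥L.space) : Fin m → ℝ)
    with hyvdef
  have hyvcont : Continuous yv :=
    continuous_subtype_val.comp (τL.continuous.comp (hg.comp τK.symm.continuous))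
  have hyvL : ∀ p, yv p ∈ L.space := fun p => (τL (g (τK.symm p))).2
  -- carriers
  choose c hc1 hc2 hc3 using fun p : ↥K.space => exists_carrier L hLfin (hyvL p)
  -- open neighbourhoods in ℝᵐ
  set W : ↥K.space → Set (Fin m → ℝ) := fun p =>
    (⋃ τ ∈ {τ | τ ∈ L.faces ∧ ¬ c p ⊆ τ}, convexHull ℝ (τ : Set (Fin m → ℝ)))ᶜ ∩
      Metric.ball (yv p) ε' with hWdef
  have hWopen : ∀ p, IsOpen (W p) := fun p =>
    (((hLfin.subset fun τ hτ => hτ.1).isClosed_biUnion fun τ _ =>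
      (τ.finite_toSet.isCompact_convexHull ℝ).isClosed).isOpen_compl).inter Metric.isOpen_ball
  have hVopen : ∀ p, IsOpen (yv ⁻¹' W p) := fun p => (hWopen p).preimage hyvcont
  have hVU : ∀ p : ↥K.space, ∃ Up : Set (Fin n → ℝ),
      IsOpen Up ∧ Subtype.val ⁻¹' Up = yv ⁻¹' W p := fun p => isOpen_induced_iff.1 (hVopen p)
  choose U hUopen hUpre using hVU
  have hmemW : ∀ p : ↥K.space, yv p ∈ W p := by
    intro p
    constructor
    · intro hmem
      obtain ⟨τ, hτS, hyτ⟩ := Set.mem_iUnion₂.1 hmem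
      exact hτS.2 (hc3 p τ hτS.1 hyτ)
    · exact Metric.mem_ball_self hε'pos
  have hcover : K.space ⊆ ⋃ p : ↥K.space, U p := by
    intro x hx
    refine Set.mem_iUnion.2 ⟨⟨x, hx⟩, ?_⟩
    have h1 : (⟨x, hx⟩ : ↥K.space) ∈ yv ⁻¹' W ⟨x, hx⟩ := hmemW ⟨x, hx⟩
    rw [← hUpre] at h1
    exact h1
  obtain ⟨δ, hδpos, hleb⟩ := lebesgue_number_lemma_of_metric hKcomp hUopen hcover
  -- base simplex geometry
  set b0 := baseBasis n with hb0
  set c0 := Finset.univ.centroid ℝ ⇑b0 with hc0def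
  have hc0 : c0 ∈ interior (convexHull ℝ (Set.range ⇑b0)) :=
    b0.centroid_mem_interior_convexHull
  obtain ⟨ρ, hρpos, hρ⟩ := Metric.mem_nhds_iff.1 (mem_interior_iff_mem_nhds.1 hc0)
  obtain ⟨M, hM⟩ := ((Set.finite_range ⇑b0).isCompact_convexHull ℝ).isBounded.exists_norm_le
  have hMc0 : 0 ≤ M + ‖c0‖ := by
    have h1 : ‖c0‖ ≤ M := hM c0 (interior_subset hc0)
    have h2 : (0:ℝ) ≤ ‖c0‖ := norm_nonneg _
    linarith
  set r : ℝ := δ / (2 * (M + ‖c0‖ + 1)) with hrdef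
  have hrpos : 0 < r := div_pos hδpos (by linarith)
  have hrne : r ≠ 0 := ne_of_gt hrpos
  -- the small simplices
  set B : ↥K.space → AffineBasis (Fin (n + 1)) ℝ (Fin n → ℝ) := fun p =>
    scaledBasis b0 r hrne ((p : Fin n → ℝ) - r • c0) with hBdef
  have hball_sub : ∀ p : ↥K.space,
      Metric.ball (p : Fin n → ℝ) (r * ρ) ⊆ convexHull ℝ (Set.range ⇑(B p)) := by
    intro p z hz
    rw [hBdef, scaledBasis_convexHull]
    refine ⟨c0 + r⁻¹ • (z - (p : Fin n → ℝ)), hρ ?_, ?_⟩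
    · rw [Metric.mem_ball, dist_eq_norm, add_sub_cancel_left, norm_smul, Real.norm_eq_abs,
        abs_of_pos (inv_pos.2 hrpos)]
      have hz' : ‖z - (p : Fin n → ℝ)‖ < r * ρ := by
        rw [← dist_eq_norm]; exact Metric.mem_ball.1 hz
      calc r⁻¹ * ‖z - (p : Fin n → ℝ)‖ < r⁻¹ * (r * ρ) := by
            exact mul_lt_mul_of_pos_left hz' (inv_pos.2 hrpos)
        _ = ρ := by field_simp
    · rw [scaleShift_apply, smul_add, smul_inv_smul₀ hrne]
      abel
  have hhull_sub : ∀ p : ↥K.space,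
      convexHull ℝ (Set.range ⇑(B p)) ⊆ Metric.ball (p : Fin n → ℝ) δ := by
    intro p z hz
    rw [hBdef, scaledBasis_convexHull] at hz
    obtain ⟨w, hw, rfl⟩ := hz
    rw [Metric.mem_ball, scaleShift_apply, dist_eq_norm]
    have h1 : (p : Fin n → ℝ) - r • c0 + r • w - (p : Fin n → ℝ) = r • (w - c0) := by
      rw [smul_sub]; abel
    rw [h1, norm_smul, Real.norm_eq_abs, abs_of_pos hrpos]
    have h2 : ‖w - c0‖ ≤ M + ‖c0‖ :=
      (norm_sub_le _ _).trans (by have := hM w hw; linarith)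
    have h3 : r * ‖w - c0‖ ≤ r * (M + ‖c0‖) :=
      mul_le_mul_of_nonneg_left h2 (le_of_lt hrpos)
    have h4 : r * (M + ‖c0‖) < δ := by
      rw [hrdef, div_mul_eq_mul_div, div_lt_iff₀ (by linarith : (0:ℝ) < 2 * (M + ‖c0‖ + 1))]
      nlinarith
    linarith
  -- finite subcover
  have hcov2 : K.space ⊆ ⋃ p : ↥K.space, Metric.ball (p : Fin n → ℝ) (r * ρ) := fun x hx =>
    Set.mem_iUnion.2 ⟨⟨x, hx⟩, Metric.mem_ball_self (by positivity)⟩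
  obtain ⟨t, ht⟩ := hKcomp.elim_finite_subcover _ (fun p : ↥K.space => Metric.isOpen_ball) hcov2
  have htne : t.Nonempty := by
    obtain ⟨x, hx⟩ := hKsp
    obtain ⟨q, hqt, _⟩ := Set.mem_iUnion₂.1 (ht hx)
    exact ⟨q, hqt⟩
  -- the Lebesgue choice
  choose P hP using fun p : ↥K.space => hleb (p : Fin n → ℝ) p.2
  set et : Fin t.card → ↥K.space := fun i => ↑(t.equivFin.symm i) with hetdef
  set σfin : Fin t.card → AffineBasis (Fin (n + 1)) ℝ (Fin n → ℝ) := fun i => B (et i)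
    with hσdef
  set Afin : Fin t.card → ((Fin n → ℝ) →ᵃ[ℝ] (Fin m → ℝ)) := fun i =>
    AffineMap.const ℝ (Fin n → ℝ) (yv (P (et i))) with hAdef
  have cond1 : K.space ⊆ ⋃ i, convexHull ℝ (Set.range ⇑(σfin i)) := by
    intro x hx
    obtain ⟨q, hqt, hxq⟩ := Set.mem_iUnion₂.1 (ht hx)
    refine Set.mem_iUnion.2 ⟨t.equivFin ⟨q, hqt⟩, ?_⟩
    have het : et (t.equivFin ⟨q, hqt⟩) = q := by
      rw [hetdef]; simp
    rw [hσdef]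
    simp only [het]
    exact hball_sub q hxq
  -- key pointwise claim
  have hkey : ∀ (x : Fin n → ℝ) (hx : x ∈ K.space),
      paperNetwork σfin Afin x ∈
        convexHull ℝ ((c ⟨x, hx⟩ : Finset (Fin m → ℝ)) : Set (Fin m → ℝ)) ∩
          Metric.closedBall (yv ⟨x, hx⟩) ε' := by
    intro x hx
    have hgood : ∀ i : Fin t.card, x ∈ convexHull ℝ (Set.range ⇑(σfin i)) →
        yv (P (et i)) ∈
          convexHull ℝ ((c ⟨x, hx⟩ : Finset (Fin m → ℝ)) : Set (Fin m → ℝ)) ∩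
            Metric.closedBall (yv ⟨x, hx⟩) ε' := by
      intro i hxi
      have hxU : x ∈ U (P (et i)) := hP (et i) (hhull_sub (et i) hxi)
      have hxV : (⟨x, hx⟩ : ↥K.space) ∈ yv ⁻¹' W (P (et i)) := by
        rw [← hUpre]; exact hxU
      obtain ⟨hnot, hballm⟩ := hxV
      constructor
      · have hsub : c (P (et i)) ⊆ c ⟨x, hx⟩ := by
          by_contra hns
          exact hnot (Set.mem_biUnion
            (show c ⟨x, hx⟩ ∈ {τ | τ ∈ L.faces ∧ ¬ c (P (et i)) ⊆ τ} from ⟨hc1 _, hns⟩)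
            (hc2 ⟨x, hx⟩))
        exact convexHull_mono (Finset.coe_subset.2 hsub) (hc2 (P (et i)))
      · rw [Metric.mem_closedBall, dist_comm]
        exact le_of_lt (Metric.mem_ball.1 hballm)
    set Pred : Fin t.card → Prop := fun i => x ∈ convexHull ℝ (Set.range ⇑(σfin i)) with hPreddef
    set I : Finset (Fin t.card) := Finset.univ.filter Pred with hIdef
    have hψ : ∀ i, simplexIndicator (σfin i) x = if Pred i then 1 else 0 := fun i =>
      simplexIndicator_eq_ite (σfin i) x
    have hIne : I.Nonempty := by
      obtain ⟨i0, hi0⟩ := Set.mem_iUnion.1 (cond1 hx)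
      exact ⟨i0, Finset.mem_filter.2 ⟨Finset.mem_univ _, hi0⟩⟩
    have hcardpos : (0:ℝ) < (I.card : ℝ) := by
      exact_mod_cast Finset.card_pos.2 hIne
    have hsum : ∑ i, simplexIndicator (σfin i) x = (I.card : ℝ) := by
      simp only [hψ]
      rw [Finset.sum_boole, hIdef]
    have e1 : ∑ i, simplexIndicator (σfin i) x • (Afin i) x = ∑ i ∈ I, yv (P (et i)) := by
      rw [← Finset.sum_subset (Finset.subset_univ I) ?van]
      case van =>
        intro i _ hi
        rw [hψ, if_neg (fun h => hi (Finset.mem_filter.2 ⟨Finset.mem_univ _, h⟩)), zero_smul]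
      refine Finset.sum_congr rfl fun i hi => ?_
      rw [hψ, if_pos (Finset.mem_filter.1 hi).2, one_smul, hAdef]
      simp
    have hNet : paperNetwork σfin Afin x = ∑ i ∈ I, (I.card : ℝ)⁻¹ • yv (P (et i)) := by
      unfold paperNetwork
      rw [hsum, e1, Finset.smul_sum]
    rw [hNet]
    have hC : Convex ℝ (convexHull ℝ ((c ⟨x, hx⟩ : Finset (Fin m → ℝ)) : Set (Fin m → ℝ)) ∩
        Metric.closedBall (yv ⟨x, hx⟩) ε') :=
      (convex_convexHull ℝ _).inter (convex_closedBall _ _)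
    refine hC.sum_mem (fun i _ => inv_nonneg.2 (Nat.cast_nonneg _)) ?_
      (fun i hi => hgood i (Finset.mem_filter.1 hi).2)
    rw [Finset.sum_const, nsmul_eq_mul, mul_inv_cancel₀ (ne_of_gt hcardpos)]
  have cond2 : ∀ x ∈ K.space, paperNetwork σfin Afin x ∈ L.space := fun x hx =>
    SimplicialComplex.convexHull_subset_space (hc1 ⟨x, hx⟩) (hkey x hx).1
  refine ⟨t.card, Finset.card_pos.2 htne, σfin, Afin, cond1, cond2,
    fun x => cond2 _ (τK x).2, ?_⟩
  intro x
  have hkx := hkey ((τK x : Fin n → ℝ)) (τK x).2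
  have hclose : dist (paperNetwork σfin Afin (τK x : Fin n → ℝ)) (yv (τK x)) ≤ ε' :=
    Metric.mem_closedBall.1 hkx.2
  have hyva : yv (τK x) = ((τL (g x) : ↥L.space) : Fin m → ℝ) := by
    rw [hyvdef]
    simp
  have h1 : dist (⟨paperNetwork σfin Afin (τK x : Fin n → ℝ), cond2 _ (τK x).2⟩ : ↥L.space)
      (τL (g x)) < δ₀ := by
    rw [Subtype.dist_eq]
    calc dist (paperNetwork σfin Afin (τK x : Fin n → ℝ)) ((τL (g x) : ↥L.space) : Fin m → ℝ)
        = dist (paperNetwork σfin Afin (τK x : Fin n → ℝ)) (yv (τK x)) := by rw [hyva]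
      _ ≤ ε' := hclose
      _ < δ₀ := by rw [hε'def]; linarith
  have h2 := hδ₀ h1
  rw [Homeomorph.symm_apply_apply] at h2
  rw [dist_comm] at h2
  exact le_of_lt h2
end

section
/- Let E be a real normed vector space, let n be a natural number, and let s be a finite set of n+1 points of E with barycenter c = (1/(n+1)) Σ_{v ∈ s} v. Then for every v ∈ s, ‖c − v‖ ≤ (n / (n+1)) · Metric.diam s. (This is the classical estimate showing that barycentric subdivision shrinks the diameter of an n-simplex by the factor n/(n+1), which underlies the bound m(Sdᵗ K) ≤ m(K)·(n/(n+1))ᵗ used in Section 6.) -/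
open scoped BigOperators

/-- the barycenter of a set of n+1 points in a real normed vector space is
within (n/(n+1)) · diam s of each of the points. -/
theorem barycenter_dist_le (E : Type*) [NormedAddCommGroup E] [NormedSpace ℝ E]
    (n : ℕ) (s : Finset E) (hcard : s.card = n + 1)
    (c : E) (hc : c = ((1 : ℝ) / ((n : ℝ) + 1)) • ∑ v ∈ s, v) :
    ∀ v ∈ s, ‖c - v‖ ≤ ((n : ℝ) / ((n : ℝ) + 1)) * Metric.diam (s : Set E) := by
  classical
  intro v hv
  have hn1 : ((n : ℝ) + 1) ≠ 0 := by positivity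
  have hbd : Bornology.IsBounded (s : Set E) := s.finite_toSet.isBounded
  have key : c - v = ((1 : ℝ) / ((n : ℝ) + 1)) • ∑ u ∈ s, (u - v) := by
    rw [hc, Finset.sum_sub_distrib, smul_sub, Finset.sum_const, hcard]
    congr 1
    rw [← Nat.cast_smul_eq_nsmul ℝ, smul_smul]
    push_cast
    rw [one_div, inv_mul_cancel₀ hn1, one_smul]
  have hsum : ∑ u ∈ s, ‖u - v‖ ≤ (n : ℝ) * Metric.diam (s : Set E) := by
    have : ∑ u ∈ s, ‖u - v‖ = ∑ u ∈ s.erase v, ‖u - v‖ := by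
      exact (Finset.sum_erase s (f := fun u => ‖u - v‖) (by simp)).symm
    rw [this]
    calc ∑ u ∈ s.erase v, ‖u - v‖ ≤ ∑ u ∈ s.erase v, Metric.diam (s : Set E) := by
          apply Finset.sum_le_sum
          intro u hu
          rw [← dist_eq_norm]
          exact Metric.dist_le_diam_of_mem hbd (Finset.mem_erase.1 hu).2 hv
      _ = (n : ℝ) * Metric.diam (s : Set E) := by
          rw [Finset.sum_const, Finset.card_erase_of_mem hv, hcard]
          simp [nsmul_eq_mul]
  rw [key]
  rw [norm_smul]
  have h1 : ‖(1 : ℝ) / ((n : ℝ) + 1)‖ = 1 / ((n : ℝ) + 1) := by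
    rw [Real.norm_eq_abs, abs_of_pos]; positivity
  rw [h1, div_mul_eq_mul_div, one_mul, div_mul_eq_mul_div]
  rw [div_le_div_iff_of_pos_right (by positivity)]
  calc ‖∑ u ∈ s, (u - v)‖ ≤ ∑ u ∈ s, ‖u - v‖ := norm_sum_le _ _
    _ ≤ (n : ℝ) * Metric.diam (s : Set E) := hsum
end

section
/- Let K be a simplicial complex in ℝⁿ, let σ, τ ∈ K.faces, and let x ∈ convexHull ℝ σ ∩ convexHull ℝ τ. Let φ : ℝⁿ → ℝᵐ be any function (a vertex map on the vertices of K). Suppose λ : ℝⁿ → ℝ and μ : ℝⁿ → ℝ are weight functions with λ_v ≥ 0 for v ∈ σ, Σ_{v ∈ σ} λ_v = 1, Σ_{v ∈ σ} λ_v • v = x, and μ_w ≥ 0 for w ∈ τ, Σ_{w ∈ τ} μ_w = 1, Σ_{w ∈ τ} μ_w • w = x. Then Σ_{v ∈ σ} λ_v • φ(v) = Σ_{w ∈ τ} μ_w • φ(w). (This is the well-definedness of the simplicial map induced by a vertex map: the barycentric extension of φ does not depend on the face of K containing the point x.) -/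
open scoped BigOperators
open Geometry

lemma unique_weights_aux {n : ℕ} (K : SimplicialComplex ℝ (Fin n → ℝ))
    {s : Finset (Fin n → ℝ)} (hs : s ∈ K.faces) (a b : (Fin n → ℝ) → ℝ)
    (ha : ∑ v ∈ s, a v = 1) (hb : ∑ v ∈ s, b v = 1)
    (hab : ∑ v ∈ s, a v • v = ∑ v ∈ s, b v • v) :
    ∀ v ∈ s, a v = b v := by
  have hind := K.indep hs
  rw [affineIndependent_iff_indicator_eq_of_affineCombination_eq] at hind
  have ha' : ∑ i : ↑s, a ↑i = 1 := by
    rw [Finset.sum_coe_sort s a]; exact ha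
  have hb' : ∑ i : ↑s, b ↑i = 1 := by
    rw [Finset.sum_coe_sort s b]; exact hb
  have h := hind Finset.univ Finset.univ (fun v => a ↑v) (fun v => b ↑v) ha' hb' ?_
  · intro v hv
    have := congrFun h ⟨v, hv⟩
    simpa [Set.indicator_apply] using this
  · rw [Finset.affineCombination_eq_linear_combination _ _ _ ha',
      Finset.affineCombination_eq_linear_combination _ _ _ hb']
    have h1 : ∑ v : ↑s, a ↑v • (v : Fin n → ℝ) = ∑ v ∈ s, a v • v :=
      Finset.sum_coe_sort s (fun v => a v • v)
    have h2 : ∑ v : ↑s, b ↑v • (v : Fin n → ℝ) = ∑ v ∈ s, b v • v :=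
      Finset.sum_coe_sort s (fun v => b v • v)
    rw [h1, h2]; exact hab

/-- the barycentric extension of a vertex map φ is well defined: its value
at a point x of the space of a simplicial complex K does not depend on the face of K
whose convex hull contains x. -/
theorem barycentric_extension_well_defined (n m : ℕ)
    (K : SimplicialComplex ℝ (Fin n → ℝ)) (σ τ : Finset (Fin n → ℝ))
    (hσ : σ ∈ K.faces) (hτ : τ ∈ K.faces) (x : Fin n → ℝ)
    (hx : x ∈ convexHull ℝ (σ : Set (Fin n → ℝ)) ∩ convexHull ℝ (τ : Set (Fin n → ℝ)))
    (φ : (Fin n → ℝ) → (Fin m → ℝ))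
    (lam mu : (Fin n → ℝ) → ℝ)
    (hlam0 : ∀ v ∈ σ, 0 ≤ lam v) (hlam1 : ∑ v ∈ σ, lam v = 1)
    (hlamx : ∑ v ∈ σ, lam v • v = x)
    (hmu0 : ∀ w ∈ τ, 0 ≤ mu w) (hmu1 : ∑ w ∈ τ, mu w = 1)
    (hmux : ∑ w ∈ τ, mu w • w = x) :
    ∑ v ∈ σ, lam v • φ v = ∑ w ∈ τ, mu w • φ w := by
  have hxi : x ∈ convexHull ℝ (↑(σ ∩ τ) : Set (Fin n → ℝ)) := by
    rw [Finset.coe_inter]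
    exact K.inter_subset_convexHull hσ hτ hx
  rw [Finset.convexHull_eq] at hxi
  obtain ⟨ν, hν0, hν1, hνx⟩ := hxi
  rw [Finset.centerMass_eq_of_sum_1 _ _ hν1] at hνx
  simp only [id] at hνx
  set ν' : (Fin n → ℝ) → ℝ := fun v => if v ∈ σ ∩ τ then ν v else 0 with hν'def
  have hστ : σ ∩ (σ ∩ τ) = σ ∩ τ := by rw [← Finset.inter_assoc, Finset.inter_self]
  have hτσ : τ ∩ (σ ∩ τ) = σ ∩ τ := by
    rw [Finset.inter_comm σ τ, ← Finset.inter_assoc, Finset.inter_self]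
  have hite : ∀ (v : Fin n → ℝ), ν' v • v = if v ∈ σ ∩ τ then ν v • v else 0 := by
    intro v; by_cases h : v ∈ σ ∩ τ
    · simp only [hν'def, if_pos h]
    · simp only [hν'def, if_neg h, zero_smul]
  have hiteφ : ∀ (v : Fin n → ℝ), ν' v • φ v = if v ∈ σ ∩ τ then ν v • φ v else 0 := by
    intro v; by_cases h : v ∈ σ ∩ τ
    · simp only [hν'def, if_pos h]
    · simp only [hν'def, if_neg h, zero_smul]
  have hν'1σ : ∑ v ∈ σ, ν' v = 1 := by
    rw [hν'def]; rw [Finset.sum_ite_mem, hστ, hν1]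
  have hν'xσ : ∑ v ∈ σ, ν' v • v = x := by
    simp_rw [hite]; rw [Finset.sum_ite_mem, hστ, hνx]
  have hν'1τ : ∑ v ∈ τ, ν' v = 1 := by
    rw [hν'def]; rw [Finset.sum_ite_mem, hτσ, hν1]
  have hν'xτ : ∑ v ∈ τ, ν' v • v = x := by
    simp_rw [hite]; rw [Finset.sum_ite_mem, hτσ, hνx]
  have hlameq := unique_weights_aux K hσ lam ν' hlam1 hν'1σ (by rw [hlamx, hν'xσ])
  have hmueq := unique_weights_aux K hτ mu ν' hmu1 hν'1τ (by rw [hmux, hν'xτ])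
  calc ∑ v ∈ σ, lam v • φ v = ∑ v ∈ σ, ν' v • φ v :=
        Finset.sum_congr rfl (fun v hv => by rw [hlameq v hv])
    _ = ∑ v ∈ σ ∩ τ, ν v • φ v := by
        simp_rw [hiteφ]; rw [Finset.sum_ite_mem, hστ]
    _ = ∑ v ∈ τ, ν' v • φ v := by
        simp_rw [hiteφ]; rw [Finset.sum_ite_mem, hτσ]
    _ = ∑ w ∈ τ, mu w • φ w :=
        Finset.sum_congr rfl (fun v hv => by rw [hmueq v hv])
end
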